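/- arXiv:1404.0931 — 8 statements merged into one kernel-verified Lean document; each statement's English description precedes it below -/
import Mathlib

section
/- Let G be a finite simple graph on n vertices and let u, v be vertices with d_G(u) ≥ 3 and d_G(v) = 1. Let G' be a graph on the same vertex set with d_{G'}(u) = d_G(u) − 1, d_{G'}(v) = 2, and d_{G'}(x) = d_G(x) for all other vertices x. If r denotes the number of vertices w ∉ {u,v} with 2 ≤ d_G(w) < d_G(u), then irr_t(G') − irr_t(G) = −2r − 2; in particular irr_t(G') < irr_t(G). -/
open Finset

/-- The total irregularity of a graph: half the sum over all ordered pairs of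
vertices of the absolute difference of degrees. -/
def irrT {V : Type*} [Fintype V] (G : SimpleGraph V) [DecidableRel G.Adj] : ℤ :=
  (∑ u : V, ∑ v : V, |(G.degree u : ℤ) - (G.degree v : ℤ)|) / 2

/-- The degree sequence of a graph, as a multiset of vertex degrees. -/
def degSeq {V : Type*} [Fintype V] (G : SimpleGraph V) [DecidableRel G.Adj] : Multiset ℕ :=
  Finset.univ.val.map (fun v => G.degree v)

private lemma even_double_abs_sum {V : Type*} [Fintype V] (f : V → ℤ) :
    (2:ℤ) ∣ ∑ x : V, ∑ y : V, |f x - f y| := by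
  have h0 : ∑ x : V, ∑ y : V, (f x - f y) = 0 := by
    simp [Finset.sum_sub_distrib, ← Finset.mul_sum]
  have key : ∀ a : ℤ, (2:ℤ) ∣ |a| - a := by
    intro a
    rcases abs_cases a with ⟨h, _⟩ | ⟨h, _⟩ <;> omega
  have : ∑ x : V, ∑ y : V, |f x - f y|
      = ∑ x : V, ∑ y : V, (|f x - f y| - (f x - f y)) := by
    rw [← sub_zero (∑ x : V, ∑ y : V, |f x - f y|), ← h0]
    simp [Finset.sum_sub_distrib, ← Finset.mul_sum]
  rw [this]
  exact Finset.dvd_sum fun x _ => Finset.dvd_sum fun y _ => key _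

theorem branch_transformation {V : Type*} [Fintype V] [DecidableEq V]
    (G G' : SimpleGraph V) [DecidableRel G.Adj] [DecidableRel G'.Adj]
    (u v : V) (huv : u ≠ v) (hu : 3 ≤ G.degree u) (hv : G.degree v = 1)
    (hu' : G'.degree u = G.degree u - 1) (hv' : G'.degree v = 2)
    (hother : ∀ x : V, x ≠ u → x ≠ v → G'.degree x = G.degree x)
    (hpart : ∀ w : V, G.degree u ≤ G.degree w ∨ G.degree w = 1 ∨
      (2 ≤ G.degree w ∧ G.degree w < G.degree u))
    (r : ℕ)
    (hr : r = (Finset.univ.filter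
      (fun w : V => w ≠ u ∧ w ≠ v ∧ 2 ≤ G.degree w ∧ G.degree w < G.degree u)).card) :
    irrT G' - irrT G = -2 * r - 2 ∧ irrT G' < irrT G := by
  classical
  have heu : (G'.degree u : ℤ) = (G.degree u : ℤ) - 1 := by
    rw [hu', Nat.cast_sub (by omega)]; norm_num
  have hev : (G'.degree v : ℤ) = 2 := by rw [hv']; norm_num
  have hdv : (G.degree v : ℤ) = 1 := by rw [hv]; norm_num
  have hew : ∀ w : V, w ≠ u → w ≠ v → (G'.degree w : ℤ) = (G.degree w : ℤ) := by
    intro w h1 h2; rw [hother w h1 h2]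
  set A : Finset V := Finset.univ \ {u, v} with hA
  have hsplit : (Finset.univ : Finset V) = insert u (insert v A) := by
    ext x
    by_cases h1 : x = u <;> by_cases h2 : x = v <;>
      simp [hA, Finset.mem_sdiff, h1, h2, huv]
  have hunA : u ∉ insert v A := by
    simp [hA, Finset.mem_sdiff, huv]
  have hvnA : v ∉ A := by simp [hA, Finset.mem_sdiff]
  have hmemA : ∀ w ∈ A, w ≠ u ∧ w ≠ v := by
    intro w hw
    simp only [hA, Finset.mem_sdiff, Finset.mem_insert, Finset.mem_singleton] at hw
    exact ⟨fun h => hw.2 (Or.inl h), fun h => hw.2 (Or.inr h)⟩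
  -- the key per-vertex computation
  have hmain : ∀ w ∈ A,
      ((|(G'.degree u : ℤ) - (G'.degree w : ℤ)| - |(G.degree u : ℤ) - (G.degree w : ℤ)|)
        + (|(G'.degree v : ℤ) - (G'.degree w : ℤ)| - |(G.degree v : ℤ) - (G.degree w : ℤ)|))
        = if 2 ≤ G.degree w ∧ G.degree w < G.degree u then (-2:ℤ) else 0 := by
    intro w hw
    obtain ⟨hwu, hwv⟩ := hmemA w hw
    rw [hew w hwu hwv, heu, hev, hdv]
    rcases hpart w with h | h | h
    · rw [if_neg (by omega)]
      rw [abs_of_nonpos (by omega), abs_of_nonpos (by omega),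
        abs_of_nonpos (by omega), abs_of_nonpos (by omega)]
      ring
    · rw [if_neg (by omega)]
      rw [abs_of_nonneg (by omega), abs_of_nonneg (by omega),
        abs_of_nonneg (by omega), abs_of_nonneg (by omega)]
      omega
    · rw [if_pos h]
      rw [abs_of_nonneg (by omega), abs_of_nonneg (by omega),
        abs_of_nonpos (by omega), abs_of_nonpos (by omega)]
      ring
  -- identification of the filtered set with the one in `hr`
  have hfilter : A.filter (fun w => 2 ≤ G.degree w ∧ G.degree w < G.degree u)
      = Finset.univ.filter
        (fun w : V => w ≠ u ∧ w ≠ v ∧ 2 ≤ G.degree w ∧ G.degree w < G.degree u) := by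
    ext w
    simp only [Finset.mem_filter, hA, Finset.mem_sdiff, Finset.mem_insert,
      Finset.mem_singleton, Finset.mem_univ, true_and]
    tauto
  have hSA : ∑ w ∈ A,
      ((|(G'.degree u : ℤ) - (G'.degree w : ℤ)| - |(G.degree u : ℤ) - (G.degree w : ℤ)|)
        + (|(G'.degree v : ℤ) - (G'.degree w : ℤ)| - |(G.degree v : ℤ) - (G.degree w : ℤ)|))
      = -2 * (r : ℤ) := by
    rw [Finset.sum_congr rfl hmain, Finset.sum_ite, Finset.sum_const, Finset.sum_const_zero,
      add_zero, hfilter, ← hr]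
    simp; ring
  have hC1 : |(G'.degree u : ℤ) - (G'.degree v : ℤ)|
      - |(G.degree u : ℤ) - (G.degree v : ℤ)| = -2 := by
    rw [heu, hev, hdv]
    rw [abs_of_nonneg (by omega), abs_of_nonneg (by omega)]
    ring
  have hC2 : |(G'.degree v : ℤ) - (G'.degree u : ℤ)|
      - |(G.degree v : ℤ) - (G.degree u : ℤ)| = -2 := by
    rw [abs_sub_comm ((G'.degree v : ℤ)) ((G'.degree u : ℤ)),
      abs_sub_comm ((G.degree v : ℤ)) ((G.degree u : ℤ))]
    exact hC1
  have hA3 : ∑ x ∈ A,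
      ((|(G'.degree x : ℤ) - (G'.degree u : ℤ)| - |(G.degree x : ℤ) - (G.degree u : ℤ)|) +
        ((|(G'.degree x : ℤ) - (G'.degree v : ℤ)| - |(G.degree x : ℤ) - (G.degree v : ℤ)|) +
          ∑ y ∈ A, (|(G'.degree x : ℤ) - (G'.degree y : ℤ)|
            - |(G.degree x : ℤ) - (G.degree y : ℤ)|)))
      = -2 * (r : ℤ) := by
    rw [← hSA]
    apply Finset.sum_congr rfl
    intro x hx
    obtain ⟨hxu, hxv⟩ := hmemA x hx
    have h0 : ∑ y ∈ A, (|(G'.degree x : ℤ) - (G'.degree y : ℤ)|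
        - |(G.degree x : ℤ) - (G.degree y : ℤ)|) = 0 := by
      apply Finset.sum_eq_zero
      intro y hy
      obtain ⟨hyu, hyv⟩ := hmemA y hy
      rw [hew x hxu hxv, hew y hyu hyv]
      ring
    rw [h0, add_zero, abs_sub_comm ((G'.degree x : ℤ)) ((G'.degree u : ℤ)),
      abs_sub_comm ((G.degree x : ℤ)) ((G.degree u : ℤ)),
      abs_sub_comm ((G'.degree x : ℤ)) ((G'.degree v : ℤ)),
      abs_sub_comm ((G.degree x : ℤ)) ((G.degree v : ℤ))]
  -- the difference of the two double sums
  have hT : (∑ x : V, ∑ y : V, |(G'.degree x : ℤ) - (G'.degree y : ℤ)|)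
      - (∑ x : V, ∑ y : V, |(G.degree x : ℤ) - (G.degree y : ℤ)|)
      = -4 * (r : ℤ) - 4 := by
    have hTT : (∑ x : V, ∑ y : V, |(G'.degree x : ℤ) - (G'.degree y : ℤ)|)
        - (∑ x : V, ∑ y : V, |(G.degree x : ℤ) - (G.degree y : ℤ)|)
        = ∑ x : V, ∑ y : V, (|(G'.degree x : ℤ) - (G'.degree y : ℤ)|
            - |(G.degree x : ℤ) - (G.degree y : ℤ)|) := by
      simp [Finset.sum_sub_distrib]
    rw [hTT, hsplit]
    simp only [Finset.sum_insert hunA, Finset.sum_insert hvnA]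
    have hS12 : (∑ y ∈ A, (|(G'.degree u : ℤ) - (G'.degree y : ℤ)|
          - |(G.degree u : ℤ) - (G.degree y : ℤ)|)) +
        (∑ y ∈ A, (|(G'.degree v : ℤ) - (G'.degree y : ℤ)|
          - |(G.degree v : ℤ) - (G.degree y : ℤ)|)) = -2 * (r : ℤ) := by
      rw [← Finset.sum_add_distrib]; exact hSA
    have hz1 : |(G'.degree u : ℤ) - (G'.degree u : ℤ)|
        - |(G.degree u : ℤ) - (G.degree u : ℤ)| = 0 := by simp
    have hz2 : |(G'.degree v : ℤ) - (G'.degree v : ℤ)|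
        - |(G.degree v : ℤ) - (G.degree v : ℤ)| = 0 := by simp
    linarith [hS12, hC1, hC2, hA3, hz1, hz2]
  have hdvd : (2:ℤ) ∣ ∑ x : V, ∑ y : V, |(G.degree x : ℤ) - (G.degree y : ℤ)| :=
    even_double_abs_sum _
  have hdvd' : (2:ℤ) ∣ ∑ x : V, ∑ y : V, |(G'.degree x : ℤ) - (G'.degree y : ℤ)| :=
    even_double_abs_sum _
  obtain ⟨k, hk⟩ := hdvd
  obtain ⟨k', hk'⟩ := hdvd'
  have h1 : irrT G = (∑ x : V, ∑ y : V, |(G.degree x : ℤ) - (G.degree y : ℤ)|) / 2 := rfl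
  have h2 : irrT G' = (∑ x : V, ∑ y : V, |(G'.degree x : ℤ) - (G'.degree y : ℤ)|) / 2 := rfl
  rw [hk] at h1
  rw [hk'] at h2
  rw [h1, h2]
  rw [hk, hk'] at hT
  constructor <;> omega
end

section
/- Every tree T on n ≥ 2 vertices satisfies irr_t(T) ≥ 2n − 4, with equality if and only if T is the path P_n (equivalently, if and only if the degree sequence of T is (2,…,2,1,1)). -/
open Finset

/-- Key decomposition of the double sum of degree differences. -/
lemma key_decomp {V : Type*} [Fintype V] (d : V → ℤ) (hd : ∀ v, 1 ≤ d v) :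
    (∑ u : V, ∑ v : V, |d u - d v|) =
      2 * (Finset.univ.filter (fun v => d v = 1)).card * (∑ v : V, (d v - 1)) +
        ∑ u ∈ Finset.univ.filter (fun v => ¬ d v = 1),
          ∑ v ∈ Finset.univ.filter (fun v => ¬ d v = 1), |d u - d v| := by
  classical
  set L := Finset.univ.filter (fun v => d v = 1) with hL
  set Lc := Finset.univ.filter (fun v => ¬ d v = 1) with hLc
  have hsplit : ∀ g : V → ℤ, (∑ u : V, g u) = ∑ u ∈ L, g u + ∑ u ∈ Lc, g u := by
    intro g
    rw [hL, hLc, Finset.sum_filter_add_sum_filter_not]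
  have hmemL : ∀ u ∈ L, d u = 1 := fun u hu => (Finset.mem_filter.mp hu).2
  have hmemLc : ∀ u ∈ Lc, 2 ≤ d u := by
    intro u hu
    have := (Finset.mem_filter.mp hu).2
    have := hd u
    omega
  have hT0 : (∑ v ∈ L, (d v - 1)) = 0 := by
    apply Finset.sum_eq_zero
    intro v hv
    rw [hmemL v hv]; ring
  have hTsplit : (∑ v : V, (d v - 1)) = ∑ v ∈ Lc, (d v - 1) := by
    rw [hsplit (fun v => d v - 1), hT0, zero_add]
  rw [hsplit (fun u => ∑ v : V, |d u - d v|)]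
  have hLpart : (∑ u ∈ L, ∑ v : V, |d u - d v|) = L.card * (∑ v : V, (d v - 1)) := by
    rw [Finset.sum_congr rfl (fun u hu => ?_), Finset.sum_const, nsmul_eq_mul]
    rw [hmemL u hu]
    apply Finset.sum_congr rfl
    intro v _
    have := hd v
    rw [abs_sub_comm, abs_of_nonneg (by omega)]
  have hLcpart : (∑ u ∈ Lc, ∑ v : V, |d u - d v|) =
      L.card * (∑ v : V, (d v - 1)) + ∑ u ∈ Lc, ∑ v ∈ Lc, |d u - d v| := by
    have : ∀ u ∈ Lc, (∑ v : V, |d u - d v|) = (d u - 1) * L.card + ∑ v ∈ Lc, |d u - d v| := by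
      intro u hu
      rw [hsplit (fun v => |d u - d v|)]
      congr 1
      rw [Finset.sum_congr rfl (fun v hv => ?_), Finset.sum_const, nsmul_eq_mul, mul_comm]
      have := hmemLc u hu
      rw [hmemL v hv, abs_of_nonneg (by omega)]
    rw [Finset.sum_congr rfl this, Finset.sum_add_distrib]
    congr 1
    rw [← Finset.sum_mul, ← hTsplit, mul_comm]
  rw [hLpart, hLcpart]
  ring

theorem tree_min_irrT {V : Type*} [Fintype V] (G : SimpleGraph V) [DecidableRel G.Adj]
    (hT : G.IsTree) (n : ℕ) (hn : 2 ≤ n) (hcard : Fintype.card V = n) :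
    2 * n - 4 ≤ irrT G ∧
      (irrT G = 2 * n - 4 ↔ degSeq G = Multiset.replicate (n - 2) 2 + {1, 1}) := by
  classical
  set d : V → ℤ := fun v => (G.degree v : ℤ) with hd_def
  have hd1 : ∀ v, 1 ≤ d v := by
    intro v
    have hpos : 0 < G.degree v := by
      rw [SimpleGraph.degree_pos_iff_exists_adj]
      obtain ⟨w, hw⟩ := Fintype.exists_ne_of_one_lt_card (by omega) v
      obtain ⟨p⟩ := hT.isConnected.preconnected v w
      obtain ⟨u, h, -, -⟩ := (SimpleGraph.Walk.not_nil_iff (p := p)).mp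
        (SimpleGraph.Walk.not_nil_of_ne (p := p) (Ne.symm hw))
      exact ⟨u, h⟩
    simp only [hd_def]
    exact_mod_cast hpos
  set L := Finset.univ.filter (fun v => d v = 1) with hL
  set Lc := Finset.univ.filter (fun v => ¬ d v = 1) with hLc
  set S := ∑ u : V, ∑ v : V, |d u - d v| with hS
  set R := ∑ u ∈ Lc, ∑ v ∈ Lc, |d u - d v| with hR_def
  have hirr : irrT G = S / 2 := rfl
  have hmemL : ∀ u ∈ L, d u = 1 := fun u hu => (Finset.mem_filter.mp hu).2
  have hmemLc : ∀ u ∈ Lc, 2 ≤ d u := by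
    intro u hu
    have h1 := (Finset.mem_filter.mp hu).2
    have h2 := hd1 u
    omega
  have hsplit : ∀ g : V → ℤ, (∑ u : V, g u) = ∑ u ∈ L, g u + ∑ u ∈ Lc, g u := by
    intro g
    rw [hL, hLc, Finset.sum_filter_add_sum_filter_not]
  -- degree sum
  have hsumN : (∑ v : V, G.degree v) + 2 = 2 * n := by
    rw [SimpleGraph.sum_degrees_eq_twice_card_edges]
    have := hT.card_edgeFinset
    omega
  have hsum : (∑ v : V, d v) = 2 * (n : ℤ) - 2 := by
    have h := congrArg (fun k : ℕ => (k : ℤ)) hsumN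
    push_cast at h
    simp only [hd_def]
    linarith
  have hT2 : (∑ v : V, (d v - 1)) = (n : ℤ) - 2 := by
    rw [Finset.sum_sub_distrib, hsum, Finset.sum_const, Finset.card_univ, hcard]
    ring
  have hdec : S = 2 * L.card * ((n : ℤ) - 2) + R := by
    rw [hS, key_decomp d hd1, hT2]
  have hcards : L.card + Lc.card = n := by
    rw [hL, hLc, Finset.card_filter_add_card_filter_not, Finset.card_univ, hcard]
  have hsumL : (∑ v ∈ L, d v) = L.card := by
    rw [Finset.sum_congr rfl hmemL, Finset.sum_const, nsmul_eq_mul, mul_one]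
  have hsumLc : (∑ v ∈ Lc, d v) = 2 * (n : ℤ) - 2 - L.card := by
    have := hsplit d
    rw [hsum, hsumL] at this
    linarith
  have hLclb : 2 * (Lc.card : ℤ) ≤ ∑ v ∈ Lc, d v := by
    have := Finset.card_nsmul_le_sum Lc d 2 hmemLc
    rw [nsmul_eq_mul] at this
    linarith
  have hcardsZ : (L.card : ℤ) + Lc.card = n := by exact_mod_cast hcards
  have hl2 : 2 ≤ L.card := by
    have : (2 : ℤ) ≤ L.card := by linarith [hsumLc, hLclb, hcardsZ]
    exact_mod_cast this
  have hR : 0 ≤ R := by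
    rw [hR_def]
    apply Finset.sum_nonneg
    intro u _
    exact Finset.sum_nonneg fun v _ => abs_nonneg _
  have hn2 : (2 : ℤ) ≤ n := by exact_mod_cast hn
  have hl2Z : (2 : ℤ) ≤ L.card := by exact_mod_cast hl2
  have hSlb : 2 * (2 * (n : ℤ) - 4) ≤ S := by
    rw [hdec]
    nlinarith
  constructor
  · rw [hirr]
    omega
  constructor
  · -- equality implies degree sequence
    intro heq
    rw [hirr] at heq
    have hub : S ≤ 4 * (n : ℤ) - 7 := by omega
    have hl : L.card = 2 := by
      by_contra h
      have h3 : 3 ≤ L.card := by omega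
      have hln : L.card ≤ n := by omega
      have hn3 : 3 ≤ n := by omega
      have h3Z : (3 : ℤ) ≤ L.card := by exact_mod_cast h3
      have hn3Z : (3 : ℤ) ≤ n := by exact_mod_cast hn3
      nlinarith
    have hlZ : (L.card : ℤ) = 2 := by exact_mod_cast hl
    have hLccard : Lc.card = n - 2 := by omega
    have hLcZ : (Lc.card : ℤ) = (n : ℤ) - 2 := by
      rw [hLccard]
      push_cast [Nat.cast_sub hn]
      ring
    have hzero : (∑ v ∈ Lc, (d v - 2)) = 0 := by
      rw [Finset.sum_sub_distrib, hsumLc, Finset.sum_const, nsmul_eq_mul, hlZ, hLcZ]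
      ring
    have hLc2 : ∀ v ∈ Lc, d v = 2 := by
      intro v hv
      have := (Finset.sum_eq_zero_iff_of_nonneg
        (fun v hv => by linarith [hmemLc v hv])).mp hzero v hv
      linarith
    -- now build the multiset
    have hLdeg : ∀ v ∈ L, G.degree v = 1 := by
      intro v hv
      have := hmemL v hv
      simp only [hd_def] at this
      exact_mod_cast this
    have hLcdeg : ∀ v ∈ Lc, G.degree v = 2 := by
      intro v hv
      have := hLc2 v hv
      simp only [hd_def] at this
      exact_mod_cast this
    have hdisj : Disjoint L Lc := by
      rw [hL, hLc]
      exact Finset.disjoint_filter_filter_not Finset.univ Finset.univ _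
    have huniv : L.disjUnion Lc hdisj = Finset.univ := by
      rw [Finset.disjUnion_eq_union, hL, hLc, Finset.filter_union_filter_not_eq]
    have hval : (Finset.univ : Finset V).val = L.val + Lc.val := by
      rw [← huniv]; rfl
    have hstep : degSeq G = Multiset.replicate 2 1 + Multiset.replicate (n - 2) 2 := by
      rw [degSeq, hval, Multiset.map_add]
      congr 1
      · rw [Multiset.eq_replicate]
        refine ⟨by simpa using hl, ?_⟩
        intro b hb
        obtain ⟨v, hv, rfl⟩ := Multiset.mem_map.mp hb
        exact hLdeg v hv
      · rw [Multiset.eq_replicate]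
        refine ⟨by simpa using hLccard, ?_⟩
        intro b hb
        obtain ⟨v, hv, rfl⟩ := Multiset.mem_map.mp hb
        exact hLcdeg v hv
    rw [hstep, add_comm]
    rfl
  · -- degree sequence implies equality
    intro hM
    have hdeg12 : ∀ v : V, G.degree v = 1 ∨ G.degree v = 2 := by
      intro v
      have hmem : G.degree v ∈ degSeq G :=
        Multiset.mem_map_of_mem _ (Finset.mem_univ v)
      rw [hM] at hmem
      rcases Multiset.mem_add.mp hmem with h | h
      · right; exact Multiset.eq_of_mem_replicate h
      · left
        simp only [Multiset.insert_eq_cons, Multiset.mem_cons, Multiset.mem_singleton] at h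
        tauto
    have hLc2 : ∀ v ∈ Lc, d v = 2 := by
      intro v hv
      have h1 := (Finset.mem_filter.mp hv).2
      rcases hdeg12 v with h | h
      · exfalso; apply h1; simp only [hd_def]; exact_mod_cast h
      · simp only [hd_def]; exact_mod_cast h
    have hsumLc2 : (∑ v ∈ Lc, d v) = 2 * Lc.card := by
      rw [Finset.sum_congr rfl hLc2, Finset.sum_const, nsmul_eq_mul, mul_comm]
    have hlZ : (L.card : ℤ) = 2 := by
      rw [hsumLc2] at hsumLc
      linarith [hcardsZ]
    have hR0 : R = 0 := by
      rw [hR_def]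
      apply Finset.sum_eq_zero
      intro u hu
      apply Finset.sum_eq_zero
      intro v hv
      rw [hLc2 u hu, hLc2 v hv]
      simp
    have hSval : S = 2 * (2 * (n : ℤ) - 4) := by
      rw [hdec, hR0, hlZ]
      ring
    rw [hirr, hSval]
    omega
end

section
/- Let n ≥ 5 and let T be a tree on n vertices that is not a path. Then irr_t(T) ≥ 4n − 10, with equality if and only if the degree sequence of T is (3, 2, …, 2, 1, 1, 1). -/
open Finset

lemma sum_indicator_Icc (D a : ℕ) (ha : a ≤ D) :
    ∑ k ∈ Icc 1 D, (if k ≤ a then (1:ℤ) else 0) = a := by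
  rw [Finset.sum_boole]
  have : (Icc 1 D).filter (fun k => k ≤ a) = Icc 1 a := by
    ext k; simp only [mem_filter, mem_Icc]; omega
  simp [this, Nat.card_Icc]

lemma abs_layer (D a b : ℕ) (ha : a ≤ D) (hb : b ≤ D) :
    |(a:ℤ) - b| = ∑ k ∈ Icc 1 D, |(if k ≤ a then (1:ℤ) else 0) - (if k ≤ b then 1 else 0)| := by
  rcases le_total a b with h | h
  · have : ∀ k ∈ Icc 1 D, |(if k ≤ a then (1:ℤ) else 0) - (if k ≤ b then 1 else 0)|
        = (if k ≤ b then (1:ℤ) else 0) - (if k ≤ a then 1 else 0) := by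
      intro k _
      by_cases h1 : k ≤ a
      · simp [h1, h1.trans h]
      · by_cases h2 : k ≤ b <;> simp [h1, h2]
    rw [Finset.sum_congr rfl this, Finset.sum_sub_distrib, sum_indicator_Icc D a ha,
      sum_indicator_Icc D b hb, abs_sub_comm, abs_of_nonneg]
    have := Int.ofNat_le.mpr h
    omega
  · have : ∀ k ∈ Icc 1 D, |(if k ≤ a then (1:ℤ) else 0) - (if k ≤ b then 1 else 0)|
        = (if k ≤ a then (1:ℤ) else 0) - (if k ≤ b then 1 else 0) := by
      intro k _
      by_cases h1 : k ≤ b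
      · simp [h1, h1.trans h]
      · by_cases h2 : k ≤ a <;> simp [h1, h2]
    rw [Finset.sum_congr rfl this, Finset.sum_sub_distrib, sum_indicator_Icc D a ha,
      sum_indicator_Icc D b hb, abs_of_nonneg]
    have := Int.ofNat_le.mpr h
    omega

lemma double_sum_indicator {V : Type*} [Fintype V] (f : V → ℤ) (hf : ∀ v, f v = 0 ∨ f v = 1) :
    ∑ u : V, ∑ v : V, |f u - f v|
      = 2 * ((∑ v : V, f v) * ((Fintype.card V : ℤ) - ∑ v : V, f v)) := by
  have key : ∀ u v : V, |f u - f v| = f u * (1 - f v) + (1 - f u) * f v := by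
    intro u v
    rcases hf u with h1 | h1 <;> rcases hf v with h2 | h2 <;> simp [h1, h2]
  calc ∑ u : V, ∑ v : V, |f u - f v|
      = ∑ u : V, ∑ v : V, (f u * (1 - f v) + (1 - f u) * f v) := by
        refine Finset.sum_congr rfl fun u _ => Finset.sum_congr rfl fun v _ => key u v
    _ = 2 * ((∑ v : V, f v) * ((Fintype.card V : ℤ) - ∑ v : V, f v)) := by
        simp only [Finset.sum_add_distrib, ← Finset.mul_sum, ← Finset.sum_mul,
          Finset.sum_sub_distrib, Finset.sum_const, Finset.card_univ, nsmul_eq_mul, mul_one]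
        ring

lemma filter_replicate' (p : ℕ → Prop) [DecidablePred p] (n a : ℕ) :
    Multiset.filter p (Multiset.replicate n a)
      = if p a then Multiset.replicate n a else 0 := by
  induction n with
  | zero => simp
  | succ n ih => by_cases h : p a <;> simp [Multiset.replicate_succ, Multiset.filter_cons, h, ih]

lemma Icc_insert_bot (a m : ℕ) (h : a ≤ m) : Icc a m = insert a (Icc (a+1) m) := by
  ext x; simp only [mem_Icc, mem_insert]; omega

lemma keyineq (N b t Q3 : ℤ) (hN : 5 ≤ N) (hbt : b + t = N - 2) (hble : b ≤ N - 3)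
    (hb0 : 0 ≤ b) (ht0 : 0 ≤ t) (h1 : Q3 ≤ b * t) (h2 : Q3 ≤ t * t) :
    b^2 + Q3 ≤ (N-3)^2 + 1 ∧ (b^2 + Q3 = (N-3)^2 + 1 → t = 1 ∧ Q3 = 1) := by
  rcases le_or_gt (2*b) (N-2) with hc | hc
  · have e0 : b*(b+t) = b*(N-2) := by rw [hbt]
    have e1 : b^2 + Q3 ≤ b*(N-2) := by nlinarith [e0, h1]
    have e2 : 2*(b*(N-2)) ≤ (N-2)*(N-2) := by nlinarith [mul_nonneg (show (0:ℤ) ≤ N-2-2*b by omega) (show (0:ℤ) ≤ N-2 by omega)]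
    have e3 : (N-2)*(N-2) + (N-4)*(N-4) = 2*((N-3)^2+1) := by ring
    have e4 : 1 ≤ (N-4)*(N-4) := by nlinarith [show (1:ℤ) ≤ N-4 by omega]
    constructor
    · linarith
    · intro he; exfalso; linarith
  · have ht1 : 1 ≤ t := by omega
    have htb : t + 1 ≤ b := by omega
    have hN' : N = b + t + 2 := by omega
    subst hN'
    have hid : b^2 + t^2 + 2*((b-1)*(t-1)) = (b+t+2-3)^2 + 1 := by ring
    have hfac : 0 ≤ (b-1)*(t-1) := mul_nonneg (by omega) (by omega)
    constructor
    · nlinarith [h2, hfac, hid]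
    · intro he
      have hfac0 : (b-1)*(t-1) ≤ 0 := by nlinarith [h2, hid]
      have : (b-1)*(t-1) = 0 := le_antisymm hfac0 hfac
      have ht : t = 1 := by
        rcases mul_eq_zero.mp this with h | h
        · omega
        · omega
      subst ht
      constructor
      · rfl
      · nlinarith [he]

theorem tree_second_min_irrT {V : Type*} [Fintype V] (G : SimpleGraph V) [DecidableRel G.Adj]
    (hT : G.IsTree) (n : ℕ) (hn : 5 ≤ n) (hcard : Fintype.card V = n)
    (hnp : degSeq G ≠ Multiset.replicate (n - 2) 2 + {1, 1}) :
    4 * n - 10 ≤ irrT G ∧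
      (irrT G = 4 * n - 10 ↔
        degSeq G = Multiset.replicate (n - 4) 2 + {3, 1, 1, 1}) := by
  classical
  set A : ℕ → ℕ := fun k => ((univ : Finset V).filter (fun v => k ≤ G.degree v)).card with hA
  have hD : ∀ v : V, G.degree v ≤ n - 1 := by
    intro v
    have := G.degree_lt_card_verts v
    omega
  have hdeg1 : ∀ v : V, 1 ≤ G.degree v := by
    intro v
    obtain ⟨w, hw⟩ : ∃ w : V, w ≠ v := by
      have h2 : 1 < Fintype.card V := by omega
      exact Fintype.exists_ne_of_one_lt_card h2 v
    obtain ⟨p⟩ := hT.isConnected.preconnected v w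
    cases p with
    | nil => exact absurd rfl hw.symm
    | cons h q =>
      rw [Nat.one_le_iff_ne_zero, ← Nat.pos_iff_ne_zero, G.degree_pos_iff_exists_adj]
      exact ⟨_, h⟩
  have hA1 : A 1 = n := by
    rw [hA]
    simp only
    rw [Finset.filter_true_of_mem (fun v _ => hdeg1 v), Finset.card_univ, hcard]
  have hAmono : ∀ j k : ℕ, j ≤ k → A k ≤ A j := by
    intro j k hjk
    apply Finset.card_le_card
    intro v hv
    simp only [mem_filter] at *
    exact ⟨hv.1, hjk.trans hv.2⟩
  have hsumdeg : ∑ v : V, G.degree v = 2 * (n - 1) := by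
    rw [G.sum_degrees_eq_twice_card_edges]
    have := hT.card_edgeFinset
    rw [hcard] at this
    omega
  have hAind : ∀ k : ℕ, (A k : ℤ) = ∑ v : V, (if k ≤ G.degree v then (1:ℤ) else 0) := by
    intro k
    rw [Finset.sum_boole, hA]
  have hAsum : ∑ k ∈ Icc 1 (n-1), (A k : ℤ) = 2 * n - 2 := by
    calc ∑ k ∈ Icc 1 (n-1), (A k : ℤ)
        = ∑ k ∈ Icc 1 (n-1), ∑ v : V, (if k ≤ G.degree v then (1:ℤ) else 0) := by
          exact Finset.sum_congr rfl fun k _ => hAind k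
      _ = ∑ v : V, ∑ k ∈ Icc 1 (n-1), (if k ≤ G.degree v then (1:ℤ) else 0) :=
          Finset.sum_comm
      _ = ∑ v : V, (G.degree v : ℤ) := by
          exact Finset.sum_congr rfl fun v _ => sum_indicator_Icc (n-1) _ (hD v)
      _ = 2 * n - 2 := by
          rw [← Nat.cast_sum, hsumdeg]
          push_cast
          omega
  have hirr : irrT G = ∑ k ∈ Icc 1 (n-1), (A k : ℤ) * (n - A k) := by
    have key : ∑ u : V, ∑ v : V, |(G.degree u : ℤ) - (G.degree v : ℤ)|
        = 2 * ∑ k ∈ Icc 1 (n-1), (A k : ℤ) * (n - A k) := by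
      calc ∑ u : V, ∑ v : V, |(G.degree u : ℤ) - (G.degree v : ℤ)|
          = ∑ u : V, ∑ v : V, ∑ k ∈ Icc 1 (n-1),
              |(if k ≤ G.degree u then (1:ℤ) else 0) - (if k ≤ G.degree v then 1 else 0)| := by
            exact Finset.sum_congr rfl fun u _ => Finset.sum_congr rfl fun v _ =>
              abs_layer (n-1) _ _ (hD u) (hD v)
        _ = ∑ u : V, ∑ k ∈ Icc 1 (n-1), ∑ v : V,
              |(if k ≤ G.degree u then (1:ℤ) else 0) - (if k ≤ G.degree v then 1 else 0)| := by
            exact Finset.sum_congr rfl fun u _ => Finset.sum_comm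
        _ = ∑ k ∈ Icc 1 (n-1), ∑ u : V, ∑ v : V,
              |(if k ≤ G.degree u then (1:ℤ) else 0) - (if k ≤ G.degree v then 1 else 0)| :=
            Finset.sum_comm
        _ = ∑ k ∈ Icc 1 (n-1), 2 * ((A k : ℤ) * (n - A k)) := by
            refine Finset.sum_congr rfl fun k _ => ?_
            have h := double_sum_indicator (fun v => if k ≤ G.degree v then (1:ℤ) else 0)
              (fun v => by by_cases h : k ≤ G.degree v <;> simp [h])
            beta_reduce at h
            rw [h, ← hAind k, hcard]
        _ = 2 * ∑ k ∈ Icc 1 (n-1), (A k : ℤ) * (n - A k) := by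
            rw [Finset.mul_sum]
    rw [irrT, key, Int.mul_ediv_cancel_left _ (by norm_num)]
  have hcount : ∀ j : ℕ, Multiset.count j (degSeq G)
      = ((univ : Finset V).filter (fun v => G.degree v = j)).card := by
    intro j
    rw [degSeq, Multiset.count_map]
    have he : (univ : Finset V).filter (fun v => G.degree v = j)
        = (univ : Finset V).filter (fun v => j = G.degree v) := by
      apply Finset.filter_congr; intro v _; exact eq_comm
    rw [he, ← Finset.filter_val]
    rfl
  have hcountA : ∀ j : ℕ,
      ((univ : Finset V).filter (fun v => G.degree v = j)).card + A (j+1) = A j := by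
    intro j
    rw [hA]
    simp only
    rw [← Finset.card_union_of_disjoint, ← Finset.filter_or]
    · congr 1
      ext v
      simp only [mem_filter, mem_univ, true_and]
      omega
    · rw [Finset.disjoint_filter]
      intro v _ h
      omega
  have hshape : ∀ p q : ℕ, A 2 = p → A 3 = q → A 4 = 0 →
      degSeq G = Multiset.replicate (n - p) 1 + Multiset.replicate (p - q) 2
        + Multiset.replicate q 3 := by
    intro p q h2 h3 h4
    have hqp : q ≤ p := by have := hAmono 2 3 (by norm_num); omega
    have hpn : p ≤ n := by have := hAmono 1 2 (by norm_num); omega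
    ext x
    rw [hcount x]
    simp only [Multiset.count_add, Multiset.count_replicate]
    match x with
    | 0 =>
      have h01 := hcountA 0
      norm_num at h01
      have hA0 : A 0 ≤ n := by
        rw [hA]; simpa [hcard] using Finset.card_filter_le (univ : Finset V) _
      simp only [show ¬(1 = 0) by omega, show ¬(2 = 0) by omega, show ¬(3 = 0) by omega,
        if_false]
      omega
    | 1 =>
      have h12 := hcountA 1
      norm_num at h12
      simp only [show ¬(2 = 1) by omega, show ¬(3 = 1) by omega, if_false, if_true]
      omega
    | 2 =>
      have h23 := hcountA 2
      norm_num at h23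
      simp only [show ¬(1 = 2) by omega, show ¬(3 = 2) by omega, if_false, if_true]
      omega
    | 3 =>
      have h34 := hcountA 3
      norm_num at h34
      have h45 : A 4 ≤ A 3 := hAmono 3 4 (by norm_num)
      have h5 : A 5 ≤ A 4 := hAmono 4 5 (by norm_num)
      simp only [show ¬(1 = 3) by omega, show ¬(2 = 3) by omega, if_false, if_true]
      omega
    | (j+4) =>
      have hle : ((univ : Finset V).filter (fun v => G.degree v = j+4)).card ≤ A (j+4) := by
        rw [hA]
        apply Finset.card_le_card
        intro v hv
        simp only [mem_filter] at hv ⊢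
        exact ⟨hv.1, by omega⟩
      have hm : A (j+4) ≤ A 4 := hAmono 4 (j+4) (by omega)
      simp only [show ¬(1 = j+4) by omega, show ¬(2 = j+4) by omega,
        show ¬(3 = j+4) by omega, if_false]
      omega
  set b : ℤ := (A 2 : ℤ) with hbdef
  set t : ℤ := ∑ k ∈ Icc 3 (n-1), (A k : ℤ) with htdef
  set Q3 : ℤ := ∑ k ∈ Icc 3 (n-1), (A k : ℤ)^2 with hQ3def
  have hsplit1 : Icc 1 (n-1) = insert 1 (Icc 2 (n-1)) := Icc_insert_bot 1 (n-1) (by omega)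
  have hsplit2 : Icc 2 (n-1) = insert 2 (Icc 3 (n-1)) := Icc_insert_bot 2 (n-1) (by omega)
  have hsplit3 : Icc 3 (n-1) = insert 3 (Icc 4 (n-1)) := Icc_insert_bot 3 (n-1) (by omega)
  have hnotmem1 : (1:ℕ) ∉ Icc 2 (n-1) := by simp
  have hnotmem2 : (2:ℕ) ∉ Icc 3 (n-1) := by simp
  have hnotmem3 : (3:ℕ) ∉ Icc 4 (n-1) := by simp
  have hbt : b + t = (n:ℤ) - 2 := by
    have h := hAsum
    rw [hsplit1, Finset.sum_insert hnotmem1, hsplit2, Finset.sum_insert hnotmem2, hA1] at h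
    rw [hbdef, htdef]
    have hn' : (5:ℤ) ≤ (n:ℤ) := by exact_mod_cast hn
    linarith
  have ht0 : 0 ≤ t := Finset.sum_nonneg fun k _ => Int.natCast_nonneg _
  have hb0 : 0 ≤ b := Int.natCast_nonneg _
  -- every term of t is ≤ b, and ≤ t
  have hterm_b : ∀ k ∈ Icc 3 (n-1), (A k : ℤ) ≤ b := by
    intro k hk
    rw [hbdef]
    exact_mod_cast hAmono 2 k (by simpa using (mem_Icc.mp hk).1.trans' (by norm_num))
  have hterm_t : ∀ k ∈ Icc 3 (n-1), (A k : ℤ) ≤ t := by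
    intro k hk
    rw [htdef]
    exact Finset.single_le_sum (f := fun j => ((A j : ℤ))) (fun j _ => Int.natCast_nonneg _) hk
  have hQ3b : Q3 ≤ b * t := by
    rw [hQ3def, htdef, Finset.mul_sum]
    apply Finset.sum_le_sum
    intro k hk
    have h1 := hterm_b k hk
    have h2 : (0:ℤ) ≤ (A k : ℤ) := Int.natCast_nonneg _
    nlinarith
  have hQ3t : Q3 ≤ t * t := by
    calc Q3 ≤ ∑ k ∈ Icc 3 (n-1), t * (A k : ℤ) := by
          rw [hQ3def]
          apply Finset.sum_le_sum
          intro k hk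
          have h1 := hterm_t k hk
          have h2 : (0:ℤ) ≤ (A k : ℤ) := Int.natCast_nonneg _
          nlinarith
      _ = t * t := by rw [← Finset.mul_sum, ← htdef]
  have hble : b ≤ (n:ℤ) - 3 := by
    by_contra hcon
    push_neg at hcon
    have hb2 : b = (n:ℤ) - 2 ∧ t = 0 := by constructor <;> omega
    have hzero : ∀ k ∈ Icc 3 (n-1), (A k : ℤ) = 0 := by
      intro k hk
      have h1 := hterm_t k hk
      have h2 : (0:ℤ) ≤ (A k : ℤ) := Int.natCast_nonneg _
      omega
    have h3m : (3:ℕ) ∈ Icc 3 (n-1) := by simp [mem_Icc]; omega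
    have h4m : (4:ℕ) ∈ Icc 3 (n-1) := by simp [mem_Icc]; omega
    have hA3 : A 3 = 0 := by have := hzero 3 h3m; exact_mod_cast this
    have hA4 : A 4 = 0 := by have := hzero 4 h4m; exact_mod_cast this
    have hA2 : A 2 = n - 2 := by
      have : (A 2 : ℤ) = (n:ℤ) - 2 := hb2.1
      omega
    have hds := hshape (n-2) 0 hA2 hA3 hA4
    apply hnp
    rw [hds]
    rw [show n - (n-2) = 2 by omega, show n - 2 - 0 = n - 2 from rfl]
    rw [Multiset.replicate_zero, add_zero, add_comm]
    congr 1
  -- irr in terms of b, t, Q3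
  have hform : irrT G = (n:ℤ)^2 - 2*n - (b^2 + Q3) := by
    rw [hirr, hsplit1, Finset.sum_insert hnotmem1, hsplit2, Finset.sum_insert hnotmem2, hA1]
    have h3 : ∑ k ∈ Icc 3 (n-1), (A k : ℤ) * (n - A k)
        = (n:ℤ) * t - Q3 := by
      rw [htdef, hQ3def, Finset.mul_sum, ← Finset.sum_sub_distrib]
      apply Finset.sum_congr rfl
      intro k _
      ring
    rw [h3]
    have : (n:ℤ) * (b + t) = n * ((n:ℤ) - 2) := by rw [hbt]
    rw [hbdef]
    nlinarith [this]
  obtain ⟨hQle, hQeq⟩ := keyineq (n:ℤ) b t Q3 (by exact_mod_cast hn) hbt hble hb0 ht0 hQ3b hQ3t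
  have hring : (n:ℤ)^2 - 2*n - (((n:ℤ)-3)^2 + 1) = 4*n - 10 := by ring
  constructor
  · rw [hform]; linarith
  constructor
  · -- equality → degree sequence
    intro heq
    rw [hform] at heq
    have hQ : b^2 + Q3 = ((n:ℤ)-3)^2 + 1 := by linarith
    obtain ⟨ht1, hQ31⟩ := hQeq hQ
    -- derive A 3 = 1, A 4 = 0
    have hsum4 : ∑ k ∈ Icc 4 (n-1), (A k : ℤ) = t - (A 3 : ℤ) := by
      rw [htdef, hsplit3, Finset.sum_insert hnotmem3]
      ring
    have h4m : (4:ℕ) ∈ Icc 4 (n-1) := by simp [mem_Icc]; omega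
    have hA3le : (A 3 : ℤ) ≤ t := hterm_t 3 (by simp [mem_Icc]; omega)
    have hA3pos : 1 ≤ A 3 := by
      by_contra hc
      push_neg at hc
      have hA3z : A 3 = 0 := by omega
      have : ∑ k ∈ Icc 4 (n-1), (A k : ℤ) = 0 := by
        apply Finset.sum_eq_zero
        intro k hk
        have := hAmono 3 k (by have := (mem_Icc.mp hk).1; omega)
        have : A k = 0 := by omega
        simp [this]
      rw [hsum4, hA3z] at this
      simp at this
      omega
    have hA31 : A 3 = 1 := by
      have : (A 3 : ℤ) ≤ 1 := by rw [ht1] at hA3le; exact hA3le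
      omega
    have hrest0 : ∑ k ∈ Icc 4 (n-1), (A k : ℤ) = 0 := by
      rw [hsum4, hA31, ht1]; norm_num
    have hA40 : A 4 = 0 := by
      have h := (Finset.sum_eq_zero_iff_of_nonneg (fun k _ => Int.natCast_nonneg (A k))).mp hrest0 4 h4m
      exact_mod_cast h
    have hA2v : A 2 = n - 3 := by
      have : b = (n:ℤ) - 3 := by omega
      rw [hbdef] at this
      omega
    have hds := hshape (n-3) 1 hA2v hA31 hA40
    rw [hds, show n - (n-3) = 3 by omega, show n - 3 - 1 = n - 4 by omega]
    rw [add_comm (Multiset.replicate 3 1) (Multiset.replicate (n-4) 2), add_assoc]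
    congr 1
    decide
  · -- degree sequence → equality
    intro hds
    have hmem : ∀ v : V, G.degree v = 1 ∨ G.degree v = 2 ∨ G.degree v = 3 := by
      intro v
      have hv : G.degree v ∈ degSeq G :=
        Multiset.mem_map_of_mem _ (Finset.mem_val.mpr (Finset.mem_univ v))
      rw [hds] at hv
      rw [Multiset.mem_add] at hv
      rcases hv with hv | hv
      · rw [Multiset.eq_of_mem_replicate hv]; omega
      · simp only [Multiset.insert_eq_cons, Multiset.mem_cons, Multiset.mem_singleton] at hv
        omega
    have hA40 : A 4 = 0 := by
      rw [hA]
      simp only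
      rw [Finset.card_eq_zero, Finset.filter_eq_empty_iff]
      intro v _
      have := hmem v
      omega
    have hA31 : A 3 = 1 := by
      have h := hcountA 3
      norm_num at h
      have hc3 : ((univ : Finset V).filter (fun v => G.degree v = 3)).card = 1 := by
        rw [← hcount 3, hds]
        rw [Multiset.count_add, Multiset.count_replicate]
        norm_num
      omega
    have hA2v : A 2 = n - 3 := by
      have h := hcountA 2
      norm_num at h
      have hc2 : ((univ : Finset V).filter (fun v => G.degree v = 2)).card = n - 4 := by
        rw [← hcount 2, hds]
        rw [Multiset.count_add, Multiset.count_replicate]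
        norm_num
      omega
    have hrest0 : ∀ k ∈ Icc 4 (n-1), A k = 0 := by
      intro k hk
      have := hAmono 4 k (mem_Icc.mp hk).1
      omega
    have ht1 : t = 1 := by
      rw [htdef, hsplit3, Finset.sum_insert hnotmem3, hA31]
      rw [Finset.sum_eq_zero (fun k hk => by rw [hrest0 k hk]; norm_num)]
      norm_num
    have hQ31 : Q3 = 1 := by
      rw [hQ3def, hsplit3, Finset.sum_insert hnotmem3, hA31]
      rw [Finset.sum_eq_zero (fun k hk => by rw [hrest0 k hk]; norm_num)]
      norm_num
    have hbv : b = (n:ℤ) - 3 := by rw [hbdef, hA2v]; push_cast; omega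
    rw [hform, hbv, hQ31]
    linarith [hring]
end

section
/- Let n ≥ 6 and let T be a tree on n vertices that is not a path and whose degree sequence is not (3, 2, …, 2, 1, 1, 1). Then irr_t(T) ≥ 6n − 20, with equality if and only if the degree sequence of T is (3, 3, 2, …, 2, 1, 1, 1, 1). -/
open Finset

namespace TreeIrrAux

def FF (M : Multiset ℕ) : ℤ :=
  (M.map (fun x : ℕ => (M.map (fun y : ℕ => |(x:ℤ) - (y:ℤ)|)).sum)).sum

lemma FF_target (k : ℕ) : FF (Multiset.replicate k 2 + {3,3,1,1,1,1}) = 12*(k:ℤ) + 32 := by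
  simp [FF, Multiset.insert_eq_cons, Multiset.map_replicate, Multiset.sum_replicate, nsmul_eq_mul]
  ring

lemma S_eq_FF {V : Type*} [Fintype V] (d : V → ℕ) :
    ∑ u : V, ∑ v : V, |(d u : ℤ) - (d v : ℤ)| = FF (Finset.univ.val.map d) := by
  rw [FF, Multiset.map_map, Finset.sum_eq_multiset_sum]
  apply congrArg Multiset.sum
  apply Multiset.map_congr rfl
  intro u _
  show ∑ v : V, |(d u : ℤ) - (d v : ℤ)|
      = ((Finset.univ.val.map d).map (fun y : ℕ => |((d u : ℕ):ℤ) - (y:ℤ)|)).sum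
  rw [Multiset.map_map, Finset.sum_eq_multiset_sum]
  rfl

lemma count_map_univ {V : Type*} [Fintype V] (d : V → ℕ) (b : ℕ) :
    (Finset.univ.val.map d).count b = (Finset.univ.filter (fun v => d v = b)).card := by
  rw [Multiset.count_map]
  rw [Finset.card_def, Finset.filter_val]
  congr 1
  apply Multiset.filter_congr
  intro x _
  exact eq_comm

lemma count1_target (n : ℕ) :
    (Multiset.replicate (n-6) 2 + ({3,3,1,1,1,1} : Multiset ℕ)).count 1 = 4 := by
  simp [Multiset.count_replicate, Multiset.insert_eq_cons, Multiset.count_cons]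

lemma count4_target (n : ℕ) :
    (Multiset.replicate (n-6) 2 + ({3,3,1,1,1,1} : Multiset ℕ)).count 4 = 0 := by
  simp [Multiset.count_replicate, Multiset.insert_eq_cons, Multiset.count_cons]


lemma eq1 (k : ℕ) : Multiset.replicate 2 1 + Multiset.replicate k 2
    = Multiset.replicate k 2 + ({1,1} : Multiset ℕ) := by
  rw [add_comm]; rfl

lemma eq2 (k : ℕ) : Multiset.replicate 3 1 + (3 ::ₘ Multiset.replicate k 2)
    = Multiset.replicate k 2 + ({3,1,1,1} : Multiset ℕ) := by
  have h : ({3,1,1,1} : Multiset ℕ) = {3} + Multiset.replicate 3 1 := rfl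
  rw [h, ← Multiset.singleton_add]
  abel

lemma eq3 (k : ℕ) : Multiset.replicate 4 1 + (3 ::ₘ 3 ::ₘ Multiset.replicate k 2)
    = Multiset.replicate k 2 + ({3,3,1,1,1,1} : Multiset ℕ) := by
  have h : ({3,3,1,1,1,1} : Multiset ℕ) = {3} + ({3} + Multiset.replicate 4 1) := rfl
  rw [h, ← Multiset.singleton_add, ← Multiset.singleton_add]
  abel

lemma main {V : Type*} [Fintype V] (d : V → ℕ) (n : ℕ) (hn : 6 ≤ n)
    (hcard : Fintype.card V = n) (hd1 : ∀ v, 1 ≤ d v)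
    (hsum : (∑ v, d v) + 2 = 2 * n) :
    (Finset.univ.val.map d = Multiset.replicate (n-2) 2 + {1,1}) ∨
    (Finset.univ.val.map d = Multiset.replicate (n-4) 2 + {3,1,1,1}) ∨
    (Finset.univ.val.map d = Multiset.replicate (n-6) 2 + {3,3,1,1,1,1} ∧
      ∑ u : V, ∑ v : V, |(d u : ℤ) - (d v : ℤ)| = 12*(n:ℤ) - 40) ∨
    (Finset.univ.val.map d ≠ Multiset.replicate (n-6) 2 + {3,3,1,1,1,1} ∧
      12*(n:ℤ) - 40 < ∑ u : V, ∑ v : V, |(d u : ℤ) - (d v : ℤ)|) := by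
  classical
  set S : ℤ := ∑ u : V, ∑ v : V, |(d u : ℤ) - (d v : ℤ)| with hSdef
  set P : Finset V := Finset.univ.filter (fun v => d v = 1) with hPdef
  set Q : Finset V := Finset.univ.filter (fun v => 2 ≤ d v) with hQdef
  have hPmem : ∀ v ∈ P, d v = 1 := fun v hv => (Finset.mem_filter.1 hv).2
  have hQmem : ∀ v ∈ Q, 2 ≤ d v := fun v hv => (Finset.mem_filter.1 hv).2
  have hdisj : Disjoint P Q := by
    rw [Finset.disjoint_left]
    intro v hv hv'
    have := hPmem v hv; have := hQmem v hv'; omega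
  have huniv : (Finset.univ : Finset V) = P.disjUnion Q hdisj := by
    ext v
    simp only [Finset.mem_disjUnion, Finset.mem_univ, true_iff]
    by_cases h : d v = 1
    · exact Or.inl (Finset.mem_filter.2 ⟨Finset.mem_univ v, h⟩)
    · exact Or.inr (Finset.mem_filter.2 ⟨Finset.mem_univ v, by have := hd1 v; omega⟩)
  have hcardPQ : P.card + Q.card = n := by
    rw [← hcard, ← Finset.card_univ, huniv, Finset.card_disjUnion]
  have hPsum : ∑ v ∈ P, d v = P.card := by
    rw [Finset.sum_congr rfl hPmem, Finset.sum_const, smul_eq_mul, mul_one]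
  have hsplit : ∑ v ∈ P, d v + ∑ v ∈ Q, d v = ∑ v : V, d v := by
    rw [huniv, Finset.sum_disjUnion]
  have hQsum : P.card + (∑ v ∈ Q, d v) + 2 = 2 * n := by
    rw [← hPsum] at *; omega
  have hQsplit : ∑ v ∈ Q, d v = 2 * Q.card + ∑ v ∈ Q, (d v - 2) := by
    calc ∑ v ∈ Q, d v = ∑ v ∈ Q, (2 + (d v - 2)) :=
          Finset.sum_congr rfl (fun v hv => by have := hQmem v hv; omega)
      _ = ∑ _v ∈ Q, 2 + ∑ v ∈ Q, (d v - 2) := Finset.sum_add_distrib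
      _ = 2 * Q.card + ∑ v ∈ Q, (d v - 2) := by
          rw [Finset.sum_const, smul_eq_mul, mul_comm]
  have hE : (∑ v ∈ Q, (d v - 2)) + 2 = P.card := by omega
  have hL2 : 2 ≤ P.card := by omega
  -- decomposition of S
  have habs_nonneg : ∀ (u v : V), (0:ℤ) ≤ |(d u : ℤ) - (d v : ℤ)| := fun u v => abs_nonneg _
  set B : ℤ := ∑ u ∈ Q, ∑ v ∈ Q, |(d u : ℤ) - (d v : ℤ)| with hBdef
  have hBnn : 0 ≤ B := Finset.sum_nonneg fun u _ => Finset.sum_nonneg fun v _ => habs_nonneg u v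
  have hQsumZ : (∑ v ∈ Q, (d v : ℤ)) = 2 * n - 2 - P.card := by
    have h := hQsum
    zify at h
    linarith
  have hQcardZ : (Q.card : ℤ) = n - P.card := by
    have := hcardPQ; push_cast; omega
  have hS : S = 2 * P.card * ((n:ℤ) - 2) + B := by
    rw [hSdef, huniv, Finset.sum_disjUnion]
    have h1 : ∀ u ∈ P, ∑ v ∈ P.disjUnion Q hdisj, |(d u : ℤ) - (d v : ℤ)| = (n:ℤ) - 2 := by
      intro u hu
      rw [Finset.sum_disjUnion]
      have e1 : ∑ v ∈ P, |(d u : ℤ) - (d v : ℤ)| = 0 := by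
        apply Finset.sum_eq_zero; intro v hv
        rw [hPmem u hu, hPmem v hv]; simp
      have e2 : ∑ v ∈ Q, |(d u : ℤ) - (d v : ℤ)| = ∑ v ∈ Q, ((d v : ℤ) - 1) := by
        apply Finset.sum_congr rfl; intro v hv
        rw [hPmem u hu, Nat.cast_one]
        rw [abs_sub_comm, abs_of_nonneg (by have := hQmem v hv; push_cast; omega)]
      rw [e1, e2, Finset.sum_sub_distrib, Finset.sum_const, hQsumZ, nsmul_eq_mul, mul_one,
        hQcardZ]
      ring
    have h2 : ∀ u ∈ Q, ∑ v ∈ P, |(d u : ℤ) - (d v : ℤ)| = P.card * ((d u : ℤ) - 1) := by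
      intro u hu
      have : ∀ v ∈ P, |(d u : ℤ) - (d v : ℤ)| = (d u : ℤ) - 1 := by
        intro v hv
        rw [hPmem v hv, Nat.cast_one,
          abs_of_nonneg (by have := hQmem u hu; push_cast; omega)]
      rw [Finset.sum_congr rfl this, Finset.sum_const, nsmul_eq_mul]
    rw [Finset.sum_congr rfl h1, Finset.sum_const, nsmul_eq_mul]
    have h3 : ∑ u ∈ Q, ∑ v ∈ P.disjUnion Q hdisj, |(d u : ℤ) - (d v : ℤ)|
        = P.card * ((2*n - 2 - P.card) - (n - P.card)) + B := by
      have : ∀ u ∈ Q, ∑ v ∈ P.disjUnion Q hdisj, |(d u : ℤ) - (d v : ℤ)|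
          = P.card * ((d u : ℤ) - 1) + ∑ v ∈ Q, |(d u : ℤ) - (d v : ℤ)| := by
        intro u hu; rw [Finset.sum_disjUnion, h2 u hu]
      rw [Finset.sum_congr rfl this, Finset.sum_add_distrib, ← hBdef, ← Finset.mul_sum,
        Finset.sum_sub_distrib, Finset.sum_const, hQsumZ, nsmul_eq_mul, mul_one, hQcardZ]
    rw [h3]
    ring
  -- helper: map of a constant function over a finset
  have map_const : ∀ (s : Finset V) (c : ℕ), (∀ v ∈ s, d v = c) →
      s.val.map d = Multiset.replicate s.card c := by
    intro s c h
    apply Multiset.eq_replicate.2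
    constructor
    · rw [Multiset.card_map]; rfl
    · intro b hb
      obtain ⟨a, ha, rfl⟩ := Multiset.mem_map.1 hb
      exact h a ha
  have hMsplit : (Finset.univ.val.map d) = P.val.map d + Q.val.map d := by
    rw [huniv, show (P.disjUnion Q hdisj).val = P.val + Q.val from rfl, Multiset.map_add]
  have hnZ : (6:ℤ) ≤ (n:ℤ) := by exact_mod_cast hn
  have hcases : P.card = 2 ∨ P.card = 3 ∨ P.card = 4 ∨ P.card = 5 ∨ 6 ≤ P.card := by omega
  rcases hcases with hL | hL | hL | hL | hL
  · -- L = 2 : path degree sequence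
    left
    have h0 : ∑ v ∈ Q, (d v - 2) = 0 := by omega
    have hQ2 : ∀ v ∈ Q, d v = 2 := by
      intro v hv
      have := Finset.sum_eq_zero_iff.1 h0 v hv
      have := hQmem v hv; omega
    have hQc : Q.card = n - 2 := by omega
    rw [hMsplit, map_const P 1 hPmem, map_const Q 2 hQ2, hL, hQc]
    exact eq1 (n-2)
  · -- L = 3
    right; left
    have h1 : ∑ v ∈ Q, (d v - 2) = 1 := by omega
    have hex : ∃ w ∈ Q, d w - 2 ≠ 0 := by
      by_contra hc
      push_neg at hc
      rw [Finset.sum_eq_zero (fun v hv => hc v hv)] at h1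
      omega
    obtain ⟨w, hw, hw0⟩ := hex
    have hsplitw : (d w - 2) + ∑ v ∈ Q.erase w, (d v - 2) = ∑ v ∈ Q, (d v - 2) :=
      Finset.add_sum_erase Q (fun v => d v - 2) hw
    have hw3 : d w = 3 := by have := hQmem w hw; omega
    have hrest0 : ∑ v ∈ Q.erase w, (d v - 2) = 0 := by omega
    have hrest : ∀ v ∈ Q.erase w, d v = 2 := by
      intro v hv
      have := Finset.sum_eq_zero_iff.1 hrest0 v hv
      have := hQmem v (Finset.mem_of_mem_erase hv); omega
    have hQval : Q.val = w ::ₘ (Q.erase w).val := by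
      rw [Finset.erase_val, Multiset.cons_erase (Finset.mem_def.1 hw)]
    have hQm : Q.val.map d = 3 ::ₘ Multiset.replicate (n-4) 2 := by
      rw [hQval, Multiset.map_cons, hw3, map_const (Q.erase w) 2 hrest,
        Finset.card_erase_of_mem hw, show Q.card - 1 = n - 4 from by omega]
    rw [hMsplit, map_const P 1 hPmem, hQm, hL]
    exact eq2 (n-4)
  · -- L = 4
    by_cases hbig : ∃ w ∈ Q, 4 ≤ d w
    · -- a vertex of degree ≥ 4 : strict
      right; right; right
      obtain ⟨w, hw, hw4'⟩ := hbig
      have hE2 : ∑ v ∈ Q, (d v - 2) = 2 := by omega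
      have hsplitw : (d w - 2) + ∑ v ∈ Q.erase w, (d v - 2) = ∑ v ∈ Q, (d v - 2) :=
        Finset.add_sum_erase Q (fun v => d v - 2) hw
      have hw4 : d w = 4 := by have := hQmem w hw; omega
      have hrest0 : ∑ v ∈ Q.erase w, (d v - 2) = 0 := by omega
      have hrest : ∀ v ∈ Q.erase w, d v = 2 := by
        intro v hv
        have := Finset.sum_eq_zero_iff.1 hrest0 v hv
        have := hQmem v (Finset.mem_of_mem_erase hv); omega
      constructor
      · intro hMeq
        have h4 : (Finset.univ.val.map d).count 4 = 0 := by rw [hMeq]; exact count4_target n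
        rw [count_map_univ] at h4
        have hwf : w ∈ Finset.univ.filter (fun v => d v = 4) :=
          Finset.mem_filter.2 ⟨Finset.mem_univ w, hw4⟩
        have := Finset.card_pos.2 ⟨w, hwf⟩
        omega
      · have hrow : ∑ v ∈ Q, |(d w:ℤ) - (d v:ℤ)| = 2 * ((Q.erase w).card : ℤ) := by
          rw [← Finset.add_sum_erase Q _ hw]
          have h0 : |(d w:ℤ) - (d w:ℤ)| = 0 := by simp
          have h2 : ∀ v ∈ Q.erase w, |(d w:ℤ) - (d v:ℤ)| = 2 := by
            intro v hv
            rw [hw4, hrest v hv]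
            norm_num
          rw [h0, Finset.sum_congr rfl h2, Finset.sum_const, nsmul_eq_mul, zero_add, mul_comm]
        have hrows : ∀ u ∈ Q.erase w, (2:ℤ) ≤ ∑ v ∈ Q, |(d u:ℤ) - (d v:ℤ)| := by
          intro u hu
          have h2 : |(d u:ℤ) - (d w:ℤ)| = 2 := by
            rw [hrest u hu, hw4]; norm_num
          calc (2:ℤ) = |(d u:ℤ) - (d w:ℤ)| := h2.symm
            _ ≤ ∑ v ∈ Q, |(d u:ℤ) - (d v:ℤ)| :=
                Finset.single_le_sum (f := fun v => |(d u:ℤ) - (d v:ℤ)|)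
                  (fun v _ => abs_nonneg _) hw
        have hB : 2 * ((Q.erase w).card:ℤ) + 2 * ((Q.erase w).card:ℤ) ≤ B := by
          rw [hBdef, ← Finset.add_sum_erase Q _ hw, hrow]
          have h := Finset.sum_le_sum hrows
          rw [Finset.sum_const, nsmul_eq_mul] at h
          linarith
        have hcw : (Q.erase w).card + 5 = n := by
          rw [Finset.card_erase_of_mem hw]; omega
        have hcwZ : ((Q.erase w).card : ℤ) = (n:ℤ) - 5 := by
          have := hcw; zify at this; linarith
        have hPZ : ((P.card:ℕ):ℤ) = 4 := by exact_mod_cast hL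
        rw [hS, hPZ]
        rw [hcwZ] at hB
        linarith
    · -- two vertices of degree 3 : equality case
      right; right; left
      push_neg at hbig
      have hE2 : ∑ v ∈ Q, (d v - 2) = 2 := by omega
      set T : Finset V := Q.filter (fun v => d v = 3) with hTdef
      have hTsum : ∑ v ∈ Q, (d v - 2) = T.card := by
        rw [← Finset.sum_filter_add_sum_filter_not Q (fun v => d v = 3) (fun v => d v - 2)]
        have h1 : ∑ v ∈ T, (d v - 2) = T.card := by
          have hh : ∀ v ∈ T, d v - 2 = 1 := fun v hv => by
            have := (Finset.mem_filter.1 hv).2; omega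
          rw [Finset.sum_congr rfl hh, Finset.sum_const, smul_eq_mul, mul_one]
        have h2 : ∑ v ∈ Q.filter (fun v => ¬ d v = 3), (d v - 2) = 0 :=
          Finset.sum_eq_zero (fun v hv => by
            have hvQ := Finset.mem_filter.1 hv
            have := hQmem v hvQ.1
            have := hbig v hvQ.1
            have := hvQ.2
            omega)
        rw [h1, h2, add_zero]
      have hT2 : T.card = 2 := by omega
      obtain ⟨w1, w2, hne, hTeq⟩ := Finset.card_eq_two.1 hT2
      have hw1T : w1 ∈ T := by rw [hTeq]; exact Finset.mem_insert_self _ _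
      have hw2T : w2 ∈ T := by rw [hTeq]; simp
      have hw1Q : w1 ∈ Q := (Finset.mem_filter.1 hw1T).1
      have hw2Q : w2 ∈ Q := (Finset.mem_filter.1 hw2T).1
      have hw13 : d w1 = 3 := (Finset.mem_filter.1 hw1T).2
      have hw23 : d w2 = 3 := (Finset.mem_filter.1 hw2T).2
      have hrest : ∀ v ∈ (Q.erase w1).erase w2, d v = 2 := by
        intro v hv
        have hv2 : v ≠ w2 := Finset.ne_of_mem_erase hv
        have hv' := Finset.mem_of_mem_erase hv
        have hv1 : v ≠ w1 := Finset.ne_of_mem_erase hv'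
        have hvQ : v ∈ Q := Finset.mem_of_mem_erase hv'
        have h2 := hQmem v hvQ
        have h3 := hbig v hvQ
        by_contra hc
        have hd3 : d v = 3 := by omega
        have : v ∈ T := Finset.mem_filter.2 ⟨hvQ, hd3⟩
        rw [hTeq] at this
        simp only [Finset.mem_insert, Finset.mem_singleton] at this
        tauto
      have hw2e : w2 ∈ Q.erase w1 := Finset.mem_erase.2 ⟨hne.symm, hw2Q⟩
      have hQval1 : Q.val = w1 ::ₘ (Q.erase w1).val := by
        rw [Finset.erase_val, Multiset.cons_erase (Finset.mem_def.1 hw1Q)]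
      have hQval2 : (Q.erase w1).val = w2 ::ₘ ((Q.erase w1).erase w2).val := by
        rw [Finset.erase_val (Q.erase w1) w2, Multiset.cons_erase (Finset.mem_def.1 hw2e)]
      have hcc : ((Q.erase w1).erase w2).card = n - 6 := by
        rw [Finset.card_erase_of_mem hw2e, Finset.card_erase_of_mem hw1Q]; omega
      have hQm : Q.val.map d = 3 ::ₘ 3 ::ₘ Multiset.replicate (n-6) 2 := by
        rw [hQval1, Multiset.map_cons, hQval2, Multiset.map_cons, hw13, hw23,
          map_const _ 2 hrest, hcc]
      have hMeq : Finset.univ.val.map d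
          = Multiset.replicate (n-6) 2 + {3,3,1,1,1,1} := by
        rw [hMsplit, map_const P 1 hPmem, hQm, hL]
        exact eq3 (n-6)
      refine ⟨hMeq, ?_⟩
      rw [hSdef, S_eq_FF d, hMeq, FF_target]
      have : ((n-6:ℕ):ℤ) = (n:ℤ) - 6 := by omega
      rw [this]; ring
  · -- L = 5 : strict
    right; right; right
    constructor
    · intro hMeq
      have h1 := congrArg (Multiset.count 1) hMeq
      rw [count_map_univ, count1_target] at h1
      rw [← hPdef] at h1
      omega
    · have hE3 : ∑ v ∈ Q, (d v - 2) = 3 := by omega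
      set T : Finset V := Q.filter (fun v => 3 ≤ d v) with hTdef
      set U : Finset V := Q.filter (fun v => ¬ 3 ≤ d v) with hUdef
      have hU2 : ∀ v ∈ U, d v = 2 := by
        intro v hv
        have h := Finset.mem_filter.1 hv
        have := hQmem v h.1
        have := h.2
        omega
      have hT3 : ∀ v ∈ T, 3 ≤ d v := fun v hv => (Finset.mem_filter.1 hv).2
      have hTU : T.card + U.card = Q.card := by
        rw [hTdef, hUdef]
        exact Finset.card_filter_add_card_filter_not _
      have hTub : T.card ≤ 3 := by
        have h1 : ∑ v ∈ T, (d v - 2) ≤ ∑ v ∈ Q, (d v - 2) :=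
          Finset.sum_le_sum_of_subset (Finset.filter_subset _ _)
        have h2 : T.card ≤ ∑ v ∈ T, (d v - 2) := by
          calc T.card = ∑ _v ∈ T, 1 := by rw [Finset.sum_const, smul_eq_mul, mul_one]
            _ ≤ ∑ v ∈ T, (d v - 2) := Finset.sum_le_sum (fun v hv => by
                have := hT3 v hv; omega)
        omega
      have hTlb : 1 ≤ T.card := by
        have hex : ∃ w ∈ Q, d w - 2 ≠ 0 := by
          by_contra hc
          push_neg at hc
          rw [Finset.sum_eq_zero (fun v hv => hc v hv)] at hE3
          omega
        obtain ⟨w, hw, hw0⟩ := hex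
        have : w ∈ T := Finset.mem_filter.2 ⟨hw, by have := hQmem w hw; omega⟩
        exact Finset.card_pos.2 ⟨w, this⟩
      have hrowT : ∀ u ∈ T, (U.card:ℤ) ≤ ∑ v ∈ Q, |(d u:ℤ) - (d v:ℤ)| := by
        intro u hu
        have h1 : (U.card:ℤ) = ∑ _v ∈ U, (1:ℤ) := by
          rw [Finset.sum_const, nsmul_eq_mul, mul_one]
        rw [h1]
        calc ∑ _v ∈ U, (1:ℤ) ≤ ∑ v ∈ U, |(d u:ℤ) - (d v:ℤ)| := by
              apply Finset.sum_le_sum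
              intro v hv
              rw [hU2 v hv]
              have h3 : (3:ℤ) ≤ (d u:ℤ) := by exact_mod_cast hT3 u hu
              rw [abs_of_nonneg (by push_cast; linarith)]
              push_cast; linarith
          _ ≤ ∑ v ∈ Q, |(d u:ℤ) - (d v:ℤ)| :=
              Finset.sum_le_sum_of_subset_of_nonneg (Finset.filter_subset _ _)
                (fun v _ _ => abs_nonneg _)
      have hrowU : ∀ u ∈ U, (T.card:ℤ) ≤ ∑ v ∈ Q, |(d u:ℤ) - (d v:ℤ)| := by
        intro u hu
        have h1 : (T.card:ℤ) = ∑ _v ∈ T, (1:ℤ) := by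
          rw [Finset.sum_const, nsmul_eq_mul, mul_one]
        rw [h1]
        calc ∑ _v ∈ T, (1:ℤ) ≤ ∑ v ∈ T, |(d u:ℤ) - (d v:ℤ)| := by
              apply Finset.sum_le_sum
              intro v hv
              rw [hU2 u hu]
              have h3 : (3:ℤ) ≤ (d v:ℤ) := by exact_mod_cast hT3 v hv
              rw [abs_sub_comm, abs_of_nonneg (by push_cast; linarith)]
              push_cast; linarith
          _ ≤ ∑ v ∈ Q, |(d u:ℤ) - (d v:ℤ)| :=
              Finset.sum_le_sum_of_subset_of_nonneg (Finset.filter_subset _ _)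
                (fun v _ _ => abs_nonneg _)
      have hBsplit : B = ∑ u ∈ T, (∑ v ∈ Q, |(d u:ℤ) - (d v:ℤ)|)
          + ∑ u ∈ U, (∑ v ∈ Q, |(d u:ℤ) - (d v:ℤ)|) := by
        rw [hBdef, hTdef, hUdef,
          Finset.sum_filter_add_sum_filter_not Q (fun v => 3 ≤ d v)]
      have hB : (T.card:ℤ) * (U.card:ℤ) + (U.card:ℤ) * (T.card:ℤ) ≤ B := by
        rw [hBsplit]
        have h1 := Finset.sum_le_sum hrowT
        have h2 := Finset.sum_le_sum hrowU
        rw [Finset.sum_const, nsmul_eq_mul] at h1 h2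
        linarith
      have hkey : 2 * T.card + 2 * U.card < 2 * (T.card * U.card) + 10 := by
        set t := T.card with htdef
        interval_cases t <;> omega
      have hQc : Q.card = n - 5 := by omega
      have hc1 : T.card + U.card + 5 = n := by omega
      have hkeyZ : 2 * ((T.card:ℕ):ℤ) + 2 * ((U.card:ℕ):ℤ)
          < 2 * (((T.card:ℕ):ℤ) * ((U.card:ℕ):ℤ)) + 10 := by exact_mod_cast hkey
      have hc1Z : ((T.card:ℕ):ℤ) + ((U.card:ℕ):ℤ) + 5 = (n:ℤ) := by exact_mod_cast hc1
      have hPZ : ((P.card:ℕ):ℤ) = 5 := by exact_mod_cast hL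
      rw [hS, hPZ]
      linarith [hB, hkeyZ, hc1Z]
  · -- L ≥ 6 : strict
    right; right; right
    constructor
    · intro hMeq
      have h1 := congrArg (Multiset.count 1) hMeq
      rw [count_map_univ, count1_target] at h1
      rw [← hPdef] at h1
      omega
    · have hPZ : (6:ℤ) ≤ ((P.card:ℕ):ℤ) := by exact_mod_cast hL
      rw [hS]
      nlinarith [hBnn, hnZ, hPZ]


end TreeIrrAux

theorem tree_third_min_irrT {V : Type*} [Fintype V] (G : SimpleGraph V) [DecidableRel G.Adj]
    (hT : G.IsTree) (n : ℕ) (hn : 6 ≤ n) (hcard : Fintype.card V = n)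
    (hnp : degSeq G ≠ Multiset.replicate (n - 2) 2 + {1, 1})
    (hns : degSeq G ≠ Multiset.replicate (n - 4) 2 + {3, 1, 1, 1}) :
    6 * n - 20 ≤ irrT G ∧
      (irrT G = 6 * n - 20 ↔
        degSeq G = Multiset.replicate (n - 6) 2 + {3, 3, 1, 1, 1, 1}) := by
  classical
  have hd1 : ∀ v : V, 1 ≤ G.degree v := by
    intro v
    have h2 : 1 < Fintype.card V := by omega
    obtain ⟨w, hw⟩ := Fintype.exists_ne_of_one_lt_card h2 v
    obtain ⟨p⟩ := hT.isConnected.preconnected v w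
    cases p with
    | nil => exact absurd rfl hw
    | cons h q => exact (G.degree_pos_iff_exists_adj v).2 ⟨_, h⟩
  have hedges : G.edgeFinset.card + 1 = Fintype.card V := hT.card_edgeFinset
  have hsum : (∑ v : V, G.degree v) + 2 = 2 * n := by
    have h := SimpleGraph.sum_degrees_eq_twice_card_edges G
    omega
  have hmain := TreeIrrAux.main (fun v => G.degree v) n hn hcard hd1 hsum
  set S : ℤ := ∑ u : V, ∑ v : V, |(G.degree u:ℤ) - (G.degree v:ℤ)| with hSdef
  have h0 : ∑ u : V, ∑ v : V, ((G.degree u:ℤ) - (G.degree v:ℤ)) = 0 := by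
    simp only [Finset.sum_sub_distrib]
    rw [sub_eq_zero]
    exact Finset.sum_comm
  have hsplitEven : ∑ u : V, ∑ v : V,
      (|(G.degree u:ℤ) - (G.degree v:ℤ)| + ((G.degree u:ℤ) - (G.degree v:ℤ)))
      = S + ∑ u : V, ∑ v : V, ((G.degree u:ℤ) - (G.degree v:ℤ)) := by
    rw [hSdef]
    simp [Finset.sum_add_distrib]
  have heven : Even S := by
    have hbig : Even (∑ u : V, ∑ v : V,
        (|(G.degree u:ℤ) - (G.degree v:ℤ)| + ((G.degree u:ℤ) - (G.degree v:ℤ)))) := by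
      apply Finset.even_sum
      intro u _
      apply Finset.even_sum
      intro v _
      rcases abs_choice ((G.degree u:ℤ) - (G.degree v:ℤ)) with h | h
      · rw [h]; exact ⟨_, rfl⟩
      · rw [h, neg_add_cancel]; exact Even.zero
    rw [hsplitEven, h0, add_zero] at hbig
    exact hbig
  obtain ⟨k, hk⟩ := heven
  have hirrk : irrT G = k := by
    have h1 : irrT G = S / 2 := by rw [irrT, ← hSdef]
    rw [h1, hk]
    omega
  have hMdeg : degSeq G = Finset.univ.val.map (fun v => G.degree v) := rfl
  rcases hmain with h | h | ⟨hMeq, hSval⟩ | ⟨hMne, hSgt⟩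
  · exact absurd (hMdeg.trans h) hnp
  · exact absurd (hMdeg.trans h) hns
  · rw [hk] at hSval
    constructor
    · rw [hirrk]; omega
    · constructor
      · intro _; exact hMdeg.trans hMeq
      · intro _; rw [hirrk]; omega
  · rw [hk] at hSgt
    constructor
    · rw [hirrk]; omega
    · constructor
      · intro hI
        rw [hirrk] at hI
        omega
      · intro hD
        exact absurd (hMdeg.symm.trans hD) hMne
end

section
/- Let n ≥ 4 and let G be a unicyclic graph on n vertices that is not a cycle. Then irr_t(G) ≥ 2n − 2, with equality if and only if the degree sequence of G is (3, 2, …, 2, 1). -/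
open Finset

section Aux

variable {V : Type*} [Fintype V]

private lemma ptwise (x y : ℤ) :
    max x 0 * (if y ≤ 0 then 1 else 0) + max y 0 * (if x ≤ 0 then 1 else 0)
      + max (-x) 0 * (if 0 ≤ y then 1 else 0) + max (-y) 0 * (if 0 ≤ x then 1 else 0)
      ≤ |x - y| := by
  rcases max_cases x 0 with ⟨h1,h2⟩|⟨h1,h2⟩ <;> rcases max_cases y 0 with ⟨h3,h4⟩|⟨h3,h4⟩ <;>
  rcases max_cases (-x) 0 with ⟨h5,h6⟩|⟨h5,h6⟩ <;> rcases max_cases (-y) 0 with ⟨h7,h8⟩|⟨h7,h8⟩ <;>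
  rcases abs_cases (x-y) with ⟨h9,h10⟩|⟨h9,h10⟩ <;>
  split_ifs <;> omega

private lemma one_term [DecidableEq V] (g : V → ℤ) (h0 : ∀ v, 0 ≤ g v)
    (h1 : ∑ v, g v = 1) : ∃ a, g a = 1 ∧ ∀ v, v ≠ a → g v = 0 := by
  obtain ⟨a, -, ha⟩ := Finset.exists_ne_zero_of_sum_ne_zero (s := univ) (f := g)
    (by rw [h1]; norm_num)
  have hsplit : g a + ∑ v ∈ univ.erase a, g v = 1 := by
    rw [Finset.add_sum_erase _ _ (mem_univ a), h1]
  have hnn : 0 ≤ ∑ v ∈ univ.erase a, g v := Finset.sum_nonneg fun v _ => h0 v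
  have hga : g a = 1 := by have := h0 a; omega
  have hz : ∑ v ∈ univ.erase a, g v = 0 := by omega
  refine ⟨a, hga, fun v hv => ?_⟩
  exact (Finset.sum_eq_zero_iff_of_nonneg fun v _ => h0 v).mp hz v
    (Finset.mem_erase.mpr ⟨hv, mem_univ v⟩)

private lemma struct_sum [DecidableEq V] (d : V → ℤ) (n : ℕ) (hn : 4 ≤ n)
    (hcard : Fintype.card V = n) (a b : V) (hab : a ≠ b) (ha : d a = 3) (hb : d b = 1)
    (ho : ∀ v, v ≠ a → v ≠ b → d v = 2) (c : ℤ) :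
    ∑ v, |d v - c| = |3 - c| + |1 - c| + ((n:ℤ) - 2) * |2 - c| := by
  have hb' : b ∈ univ.erase a := Finset.mem_erase.mpr ⟨hab.symm, mem_univ b⟩
  have h1 : ∑ v, |d v - c| = |d a - c| + ∑ v ∈ univ.erase a, |d v - c| :=
    (Finset.add_sum_erase _ _ (mem_univ a)).symm
  have h2 : ∑ v ∈ univ.erase a, |d v - c|
      = |d b - c| + ∑ v ∈ (univ.erase a).erase b, |d v - c| :=
    (Finset.add_sum_erase _ _ hb').symm
  have h3 : ∑ v ∈ (univ.erase a).erase b, |d v - c|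
      = ((univ.erase a).erase b).card • |2 - c| := by
    rw [← Finset.sum_const]
    refine Finset.sum_congr rfl fun v hv => ?_
    have hvb : v ≠ b := (Finset.mem_erase.mp hv).1
    have hva : v ≠ a := (Finset.mem_erase.mp (Finset.mem_erase.mp hv).2).1
    rw [ho v hva hvb]
  have hcard2 : ((univ.erase a).erase b).card = n - 2 := by
    rw [Finset.card_erase_of_mem hb', Finset.card_erase_of_mem (mem_univ a), card_univ, hcard]
    omega
  have hcast : ((n - 2 : ℕ) : ℤ) = (n:ℤ) - 2 := by omega
  rw [h1, h2, h3, hcard2, ha, hb, nsmul_eq_mul, hcast]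
  ring

private lemma struct_T [DecidableEq V] (d : V → ℤ) (n : ℕ) (hn : 4 ≤ n)
    (hcard : Fintype.card V = n) (a b : V) (hab : a ≠ b) (ha : d a = 3) (hb : d b = 1)
    (ho : ∀ v, v ≠ a → v ≠ b → d v = 2) :
    ∑ u, ∑ v, |d u - d v| = 4 * (n:ℤ) - 4 := by
  have key := struct_sum d n hn hcard a b hab ha hb ho
  have inner : ∀ u : V, ∑ v, |d u - d v|
      = |3 - d u| + |1 - d u| + ((n:ℤ) - 2) * |2 - d u| := by
    intro u
    rw [Finset.sum_congr rfl fun v _ => abs_sub_comm (d u) (d v), key (d u)]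
  rw [Finset.sum_congr rfl fun u _ => inner u]
  rw [Finset.sum_add_distrib, Finset.sum_add_distrib, ← Finset.mul_sum]
  have e1 : ∑ u, |3 - d u| = ∑ u, |d u - 3| := Finset.sum_congr rfl fun u _ => abs_sub_comm _ _
  have e2 : ∑ u, |1 - d u| = ∑ u, |d u - 1| := Finset.sum_congr rfl fun u _ => abs_sub_comm _ _
  have e3 : ∑ u, |2 - d u| = ∑ u, |d u - 2| := Finset.sum_congr rfl fun u _ => abs_sub_comm _ _
  rw [e1, e2, e3, key 3, key 1, key 2]
  have hn' : (4:ℤ) ≤ (n:ℤ) := by exact_mod_cast hn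
  have a1 : |(3:ℤ) - 3| = 0 := by norm_num
  have a2 : |(1:ℤ) - 3| = 2 := by norm_num
  have a3 : |(2:ℤ) - 3| = 1 := by norm_num
  have a4 : |(3:ℤ) - 1| = 2 := by norm_num
  have a5 : |(1:ℤ) - 1| = 0 := by norm_num
  have a6 : |(2:ℤ) - 1| = 1 := by norm_num
  have a7 : |(3:ℤ) - 2| = 1 := by norm_num
  have a8 : |(1:ℤ) - 2| = 1 := by norm_num
  have a9 : |(2:ℤ) - 2| = 0 := by norm_num
  rw [a1, a2, a3, a4, a5, a6, a7, a8, a9]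
  ring

private lemma core [DecidableEq V] (d : V → ℤ) (n : ℕ) (hn : 4 ≤ n)
    (hcard : Fintype.card V = n) (hd1 : ∀ v, 1 ≤ d v) (hsum : ∑ v, d v = 2 * n)
    (hne : ∃ v, d v ≠ 2) :
    ((∃ a b, a ≠ b ∧ d a = 3 ∧ d b = 1 ∧ ∀ v, v ≠ a → v ≠ b → d v = 2)
        ∧ ∑ u, ∑ v, |d u - d v| = 4 * (n:ℤ) - 4)
      ∨ 4 * (n:ℤ) ≤ ∑ u, ∑ v, |d u - d v| := by
  set f : V → ℤ := fun v => d v - 2 with hf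
  have hfsum : ∑ v, f v = 0 := by
    simp only [hf, Finset.sum_sub_distrib, hsum, Finset.sum_const, card_univ, hcard]
    push_cast; ring
  set A : ℤ := ∑ v, max (f v) 0 with hA
  set B : ℤ := ∑ v, max (-f v) 0 with hB
  have hAnn : 0 ≤ A := Finset.sum_nonneg fun v _ => le_max_right _ _
  have hAB : A = B := by
    have hd : A - B = ∑ v, f v := by
      rw [hA, hB, ← Finset.sum_sub_distrib]
      refine Finset.sum_congr rfl fun v _ => ?_
      rcases le_total (f v) 0 with h | h
      · rw [max_eq_right h, max_eq_left (by omega)]; ring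
      · rw [max_eq_left h, max_eq_right (by omega)]; ring
    have := hd.trans hfsum
    omega
  have hA1 : 1 ≤ A := by
    obtain ⟨v, hv⟩ := hne
    have hfv : f v = -1 ∨ 1 ≤ f v := by
      have := hd1 v; simp only [hf]; omega
    rcases hfv with h | h
    · have : (1:ℤ) ≤ max (-f v) 0 := by rw [h]; norm_num
      have hle : max (-f v) 0 ≤ B :=
        Finset.single_le_sum (f := fun u => max (-f u) 0)
          (fun u _ => le_max_right _ _) (mem_univ v)
      omega
    · have : (1:ℤ) ≤ max (f v) 0 := le_trans h (le_max_left _ _)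
      have hle : max (f v) 0 ≤ A :=
        Finset.single_le_sum (f := fun u => max (f u) 0)
          (fun u _ => le_max_right _ _) (mem_univ v)
      omega
  rcases eq_or_lt_of_le hA1 with hAeq | hA2
  · -- A = 1 : extremal structure
    left
    obtain ⟨a, ha1, ha0⟩ := one_term (fun v => max (f v) 0)
      (fun v => le_max_right _ _) hAeq.symm
    obtain ⟨b, hb1, hb0⟩ := one_term (fun v => max (-f v) 0)
      (fun v => le_max_right _ _) (hAB.symm.trans hAeq.symm)
    have hfa : f a = 1 := by
      rcases max_cases (f a) 0 with ⟨h1, h2⟩ | ⟨h1, h2⟩ <;> omega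
    have hfb : f b = -1 := by
      rcases max_cases (-f b) 0 with ⟨h1, h2⟩ | ⟨h1, h2⟩ <;> omega
    have hab : a ≠ b := by intro h; rw [h] at hfa; omega
    have hother : ∀ v, v ≠ a → v ≠ b → d v = 2 := by
      intro v hva hvb
      have h1 := ha0 v hva
      have h2 := hb0 v hvb
      have e1 : f v ≤ 0 := by
        rcases max_cases (f v) 0 with ⟨g1, g2⟩ | ⟨g1, g2⟩ <;> omega
      have e2 : 0 ≤ f v := by
        rcases max_cases (-f v) 0 with ⟨g1, g2⟩ | ⟨g1, g2⟩ <;> omega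
      have : f v = 0 := le_antisymm e1 e2
      simp only [hf] at this; omega
    have hda : d a = 3 := by simp only [hf] at hfa; omega
    have hdb : d b = 1 := by simp only [hf] at hfb; omega
    exact ⟨⟨a, b, hab, hda, hdb, hother⟩,
      struct_T d n hn hcard a b hab hda hdb hother⟩
  · -- A ≥ 2 : strict bound
    right
    set CI : ℤ := ∑ v, (if f v ≤ 0 then (1:ℤ) else 0) with hCI
    set CK : ℤ := ∑ v, (if (0:ℤ) ≤ f v then (1:ℤ) else 0) with hCK
    have hCInn : 0 ≤ CI := Finset.sum_nonneg fun v _ => by positivity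
    have hCKnn : 0 ≤ CK := Finset.sum_nonneg fun v _ => by positivity
    have hIK : (n:ℤ) ≤ CI + CK := by
      rw [hCI, hCK, ← Finset.sum_add_distrib]
      calc (n:ℤ) = ∑ _v : V, (1:ℤ) := by
            rw [Finset.sum_const, card_univ, hcard]; push_cast; ring
        _ ≤ _ := Finset.sum_le_sum fun v _ => by split_ifs <;> omega
      
    have hlow : 2 * (A * CI) + 2 * (B * CK) ≤ ∑ u, ∑ v, |d u - d v| := by
      have step : ∀ u v : V, max (f u) 0 * (if f v ≤ 0 then 1 else 0)
          + max (f v) 0 * (if f u ≤ 0 then 1 else 0)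
          + max (-f u) 0 * (if (0:ℤ) ≤ f v then 1 else 0)
          + max (-f v) 0 * (if (0:ℤ) ≤ f u then 1 else 0) ≤ |d u - d v| := by
        intro u v
        have : |d u - d v| = |f u - f v| := by simp only [hf]; ring_nf
        rw [this]
        exact ptwise (f u) (f v)
      calc 2 * (A * CI) + 2 * (B * CK)
          = ∑ u, ∑ v, (max (f u) 0 * (if f v ≤ 0 then 1 else 0)
            + max (f v) 0 * (if f u ≤ 0 then 1 else 0)
            + max (-f u) 0 * (if (0:ℤ) ≤ f v then 1 else 0)
            + max (-f v) 0 * (if (0:ℤ) ≤ f u then 1 else 0)) := by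
            simp only [Finset.sum_add_distrib]
            rw [show (∑ u : V, ∑ v : V, max (f u) 0 * (if f v ≤ 0 then (1:ℤ) else 0)) = A * CI
              from by rw [hA, hCI, ← Finset.sum_mul_sum]]
            rw [show (∑ u : V, ∑ v : V, max (f v) 0 * (if f u ≤ 0 then (1:ℤ) else 0)) = A * CI
              from by rw [hA, hCI, Finset.sum_comm, ← Finset.sum_mul_sum]]
            rw [show (∑ u : V, ∑ v : V, max (-f u) 0 * (if (0:ℤ) ≤ f v then (1:ℤ) else 0)) = B * CK
              from by rw [hB, hCK, ← Finset.sum_mul_sum]]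
            rw [show (∑ u : V, ∑ v : V, max (-f v) 0 * (if (0:ℤ) ≤ f u then (1:ℤ) else 0)) = B * CK
              from by rw [hB, hCK, Finset.sum_comm, ← Finset.sum_mul_sum]]
            ring
        _ ≤ ∑ u, ∑ v, |d u - d v| :=
            Finset.sum_le_sum fun u _ => Finset.sum_le_sum fun v _ => step u v
    have hfinal : 4 * (n:ℤ) ≤ 2 * (A * CI) + 2 * (B * CK) := by nlinarith [hA2, hCInn, hCKnn, hIK, hAB]
    linarith

end Aux

section DegSeqIff

variable {V : Type*} [Fintype V]

private lemma degseq_iff [DecidableEq V] (G : SimpleGraph V) [DecidableRel G.Adj]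
    (n : ℕ) (hn : 4 ≤ n) (hcard : Fintype.card V = n) :
    (∃ a b : V, a ≠ b ∧ G.degree a = 3 ∧ G.degree b = 1
        ∧ ∀ v, v ≠ a → v ≠ b → G.degree v = 2)
      ↔ degSeq G = Multiset.replicate (n - 2) 2 + {3, 1} := by
  have pack : ∀ a b : V, a ≠ b → ∃ M : Multiset V,
      (Finset.univ.val : Multiset V) = a ::ₘ b ::ₘ M ∧ Multiset.card M = n - 2
        ∧ (∀ v, v ∈ M ↔ v ≠ a ∧ v ≠ b) := by
    intro a b hab
    have hnd : (Finset.univ.val : Multiset V).Nodup := Finset.univ.nodup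
    have ha : a ∈ (Finset.univ.val : Multiset V) := Finset.mem_univ_val a
    have hb : b ∈ (Finset.univ.val : Multiset V).erase a := by
      rw [Multiset.mem_erase_of_ne hab.symm]; exact Finset.mem_univ_val b
    refine ⟨(Finset.univ.val.erase a).erase b, ?_, ?_, ?_⟩
    · rw [Multiset.cons_erase hb, Multiset.cons_erase ha]
    · rw [Multiset.card_erase_of_mem hb, Multiset.card_erase_of_mem ha]
      simp only [← Finset.card_def, Finset.card_univ, hcard, Nat.pred_eq_sub_one]
      omega
    · intro v
      constructor
      · intro hv
        have h1 := ((hnd.erase a).mem_erase_iff).mp hv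
        have h2 := (hnd.mem_erase_iff).mp h1.2
        exact ⟨h2.1, h1.1⟩
      · rintro ⟨hva, hvb⟩
        rw [(hnd.erase a).mem_erase_iff]
        exact ⟨hvb, by rw [hnd.mem_erase_iff]; exact ⟨hva, Finset.mem_univ_val v⟩⟩
  have hrepl : ∀ (R : Multiset ℕ), R + ({3, 1} : Multiset ℕ) = 3 ::ₘ 1 ::ₘ R := by
    intro R
    rw [add_comm]
    simp [Multiset.insert_eq_cons, Multiset.cons_add, Multiset.singleton_add]
  constructor
  · rintro ⟨a, b, hab, ha3, hb1, ho⟩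
    obtain ⟨M, hMuv, hMcard, hMmem⟩ := pack a b hab
    unfold degSeq
    rw [hMuv, Multiset.map_cons, Multiset.map_cons, ha3, hb1, hrepl]
    congr 1
    congr 1
    rw [Multiset.eq_replicate]
    refine ⟨by rw [Multiset.card_map]; exact hMcard, ?_⟩
    intro x hx
    obtain ⟨v, hv, hvx⟩ := Multiset.mem_map.mp hx
    obtain ⟨hva, hvb⟩ := (hMmem v).mp hv
    rw [← hvx]; exact ho v hva hvb
  · intro hds
    have h3 : 3 ∈ degSeq G := by rw [hds]; simp [Multiset.mem_add]
    have h1 : 1 ∈ degSeq G := by rw [hds]; simp [Multiset.mem_add]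
    obtain ⟨a, -, ha3⟩ := Multiset.mem_map.mp h3
    obtain ⟨b, -, hb1⟩ := Multiset.mem_map.mp h1
    have hab : a ≠ b := by intro h; rw [h, hb1] at ha3; omega
    obtain ⟨M, hMuv, hMcard, hMmem⟩ := pack a b hab
    refine ⟨a, b, hab, ha3, hb1, ?_⟩
    have hexp : degSeq G = 3 ::ₘ 1 ::ₘ M.map (fun v => G.degree v) := by
      unfold degSeq
      rw [hMuv, Multiset.map_cons, Multiset.map_cons, ha3, hb1]
    have hM : M.map (fun v => G.degree v) = Multiset.replicate (n - 2) 2 := by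
      have h := hexp.symm.trans hds
      rw [hrepl] at h
      exact (Multiset.cons_inj_right (1:ℕ)).mp ((Multiset.cons_inj_right (3:ℕ)).mp h)
    intro v hva hvb
    have : G.degree v ∈ Multiset.replicate (n - 2) 2 := by
      rw [← hM]; exact Multiset.mem_map_of_mem _ ((hMmem v).mpr ⟨hva, hvb⟩)
    exact Multiset.eq_of_mem_replicate this

end DegSeqIff

theorem unicyclic_second_min_irrT {V : Type*} [Fintype V] (G : SimpleGraph V)
    [DecidableRel G.Adj]
    (hconn : G.Connected) (n : ℕ) (hn : 4 ≤ n) (hcard : Fintype.card V = n)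
    (hedges : G.edgeFinset.card = n)
    (hnotcycle : ¬ ∀ v : V, G.degree v = 2) :
    2 * n - 2 ≤ irrT G ∧
      (irrT G = 2 * n - 2 ↔ degSeq G = Multiset.replicate (n - 2) 2 + {3, 1}) := by
  classical
  set d : V → ℤ := fun v => (G.degree v : ℤ) with hd
  have hd1 : ∀ v, 1 ≤ d v := by
    intro v
    have hlt : 1 < Fintype.card V := by omega
    obtain ⟨w, hw⟩ := Fintype.exists_ne_of_one_lt_card hlt v
    obtain ⟨p⟩ := hconn.preconnected v w
    have hdeg : 0 < G.degree v := by
      rw [SimpleGraph.degree_pos_iff_exists_adj]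
      cases p with
      | nil => exact absurd rfl hw
      | cons h q => exact ⟨_, h⟩
    simp only [hd]; exact_mod_cast hdeg
  have hsum : ∑ v, d v = 2 * n := by
    have := G.sum_degrees_eq_twice_card_edges
    rw [hedges] at this
    simp only [hd]
    exact_mod_cast this
  have hne : ∃ v, d v ≠ 2 := by
    push_neg at hnotcycle
    obtain ⟨v, hv⟩ := hnotcycle
    exact ⟨v, by simp only [hd]; exact_mod_cast hv⟩
  have hirr : irrT G = (∑ u, ∑ v, |d u - d v|) / 2 := rfl
  rcases core d n hn hcard hd1 hsum hne with ⟨⟨a, b, hab, hda, hdb, ho⟩, hT⟩ | hT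
  · have hval : irrT G = 2 * (n:ℤ) - 2 := by rw [hirr, hT]; omega
    have hstruct : ∃ a b : V, a ≠ b ∧ G.degree a = 3 ∧ G.degree b = 1
        ∧ ∀ v, v ≠ a → v ≠ b → G.degree v = 2 := by
      refine ⟨a, b, hab, ?_, ?_, fun v hva hvb => ?_⟩
      · have := hda; simp only [hd] at this; exact_mod_cast this
      · have := hdb; simp only [hd] at this; exact_mod_cast this
      · have := ho v hva hvb; simp only [hd] at this; exact_mod_cast this
    constructor
    · rw [hval]
    · exact ⟨fun _ => (degseq_iff G n hn hcard).mp hstruct, fun _ => hval⟩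
  · have hge : 2 * (n:ℤ) ≤ irrT G := by rw [hirr]; omega
    constructor
    · have : (4:ℤ) ≤ (n:ℤ) := by exact_mod_cast hn
      linarith
    · constructor
      · intro h
        have : (4:ℤ) ≤ (n:ℤ) := by exact_mod_cast hn
        exfalso; rw [h] at hge; linarith
      · intro hds
        exfalso
        obtain ⟨a, b, hab, ha3, hb1, ho⟩ := (degseq_iff G n hn hcard).mpr hds
        have hT4 : ∑ u, ∑ v, |d u - d v| = 4 * (n:ℤ) - 4 := by
          refine struct_T d n hn hcard a b hab ?_ ?_ fun v hva hvb => ?_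
          · simp only [hd, ha3]; norm_num
          · simp only [hd, hb1]; norm_num
          · simp only [hd, ho v hva hvb]; norm_num
        have : (4:ℤ) ≤ (n:ℤ) := by exact_mod_cast hn
        rw [hT4] at hT
        linarith
end

section
/- Let n ≥ 5 and let G be a unicyclic graph on n vertices that is not a cycle and whose degree sequence is not (3, 2, …, 2, 1). Then irr_t(G) ≥ 4n − 8, with equality if and only if the degree sequence of G is (3, 3, 2, …, 2, 1, 1). -/
open Finset

/-- Auxiliary: the total irregularity double sum as a function of a multiset. -/
def msIrr (M : Multiset ℕ) : ℤ :=
  (M.map (fun a : ℕ => (M.map (fun b : ℕ => |(a:ℤ) - (b:ℤ)|)).sum)).sum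

lemma T_multiset {V : Type*} [Fintype V] (G : SimpleGraph V) [DecidableRel G.Adj] :
    (∑ u : V, ∑ v : V, |(G.degree u : ℤ) - (G.degree v : ℤ)|) = msIrr (degSeq G) := by
  rw [msIrr, degSeq, Multiset.map_map, Finset.sum]
  congr 1
  apply Multiset.map_congr rfl
  intro u _
  show _ = ((Multiset.map (fun v => G.degree v) univ.val).map _).sum
  rw [Multiset.map_map, Finset.sum]
  rfl

lemma irr_calc (m : ℕ) : msIrr (Multiset.replicate m 2 + {3,3,1,1}) = 8*m + 16 := by
  simp [msIrr, Multiset.map_replicate, Multiset.sum_replicate, Multiset.insert_eq_cons,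
    Multiset.map_cons, Multiset.sum_cons, Multiset.map_singleton, Multiset.sum_singleton]
  ring

lemma arith_key (k b p n : ℕ) (hk2 : 2 ≤ k) (hp1 : 1 ≤ p) (hpk : p ≤ k)
    (hkbp : k + b + p = n) :
    4*n ≤ 2*(k*b)+k*k+k*p + 8 ∧ (2*(k*b)+k*k+k*p + 8 ≤ 4*n → k = 2 ∧ p = 2) := by
  rcases Nat.lt_or_ge k 4 with h4 | h4
  · interval_cases k <;> omega
  · have h1 : 4*b ≤ k*b := Nat.mul_le_mul_right b h4
    have h2 : 4*k ≤ k*k := Nat.mul_le_mul_right k h4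
    have h3 : 4*p ≤ k*p := Nat.mul_le_mul_right p h4
    omega

theorem unicyclic_third_min_irrT {V : Type*} [Fintype V] (G : SimpleGraph V)
    [DecidableRel G.Adj]
    (hconn : G.Connected) (n : ℕ) (hn : 5 ≤ n) (hcard : Fintype.card V = n)
    (hedges : G.edgeFinset.card = n)
    (hnotcycle : ¬ ∀ v : V, G.degree v = 2)
    (hns : degSeq G ≠ Multiset.replicate (n - 2) 2 + {3, 1}) :
    4 * n - 8 ≤ irrT G ∧
      (irrT G = 4 * n - 8 ↔
        degSeq G = Multiset.replicate (n - 4) 2 + {3, 3, 1, 1}) := by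
  classical
  have hpos : ∀ v : V, 1 ≤ G.degree v := by
    intro v
    have h2 : 1 < Fintype.card V := by omega
    obtain ⟨w, hw⟩ := Fintype.exists_ne_of_one_lt_card h2 v
    obtain ⟨pw⟩ := hconn.preconnected v w
    have hnil : ¬ pw.Nil := SimpleGraph.Walk.not_nil_of_ne (Ne.symm hw)
    have : 0 < G.degree v :=
      (G.degree_pos_iff_exists_adj v).mpr ⟨_, pw.adj_snd hnil⟩
    omega
  set A := univ.filter (fun v => G.degree v = 1) with hAdef
  set B := univ.filter (fun v => G.degree v = 2) with hBdef
  set C := univ.filter (fun v => 3 ≤ G.degree v) with hCdef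
  have hmemA : ∀ v, v ∈ A ↔ G.degree v = 1 := fun v => by simp [hAdef]
  have hmemB : ∀ v, v ∈ B ↔ G.degree v = 2 := fun v => by simp [hBdef]
  have hmemC : ∀ v, v ∈ C ↔ 3 ≤ G.degree v := fun v => by simp [hCdef]
  have hAB : Disjoint A B := by
    rw [Finset.disjoint_left]
    intro v hv hv2
    rw [hmemA] at hv; rw [hmemB] at hv2; omega
  have hABC : Disjoint (A ∪ B) C := by
    rw [Finset.disjoint_left]
    intro v hv hv2
    rw [Finset.mem_union, hmemA, hmemB] at hv; rw [hmemC] at hv2; omega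
  have huniv : (univ : Finset V) = (A ∪ B) ∪ C := by
    ext v
    simp only [Finset.mem_union, hmemA v, hmemB v, hmemC v, Finset.mem_univ, true_iff]
    have := hpos v; omega
  set k := A.card with hk
  set b := B.card with hb
  set p := C.card with hp
  have hkbp : k + b + p = n := by
    have h1 : (A ∪ B).card = k + b := Finset.card_union_of_disjoint hAB
    have h2 : ((A ∪ B) ∪ C).card = (A ∪ B).card + p := Finset.card_union_of_disjoint hABC
    have h3 : ((A ∪ B) ∪ C).card = n := by rw [← huniv, Finset.card_univ, hcard]
    omega
  have hsplitN : ∀ g : V → ℕ, ∑ v : V, g v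
      = (∑ v ∈ A, g v) + (∑ v ∈ B, g v) + (∑ v ∈ C, g v) := by
    intro g
    rw [← Finset.sum_union hAB, ← Finset.sum_union hABC, ← huniv]
  have hsplitZ : ∀ g : V → ℤ, ∑ v : V, g v
      = (∑ v ∈ A, g v) + (∑ v ∈ B, g v) + (∑ v ∈ C, g v) := by
    intro g
    rw [← Finset.sum_union hAB, ← Finset.sum_union hABC, ← huniv]
  have hsum : (∑ v : V, G.degree v) = 2 * n := by
    rw [G.sum_degrees_eq_twice_card_edges, hedges]
  have hsumA : ∑ v ∈ A, G.degree v = k := by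
    rw [Finset.sum_congr rfl (fun v hv => (hmemA v).mp hv), Finset.sum_const, smul_eq_mul,
      mul_one]
  have hsumB : ∑ v ∈ B, G.degree v = 2 * b := by
    rw [Finset.sum_congr rfl (fun v hv => (hmemB v).mp hv), Finset.sum_const, smul_eq_mul,
      mul_comm]
  set SC := ∑ v ∈ C, G.degree v with hSCdef
  have hSC3 : 3 * p ≤ SC := by
    rw [hSCdef]
    calc 3 * p = ∑ _v ∈ C, 3 := by rw [Finset.sum_const, smul_eq_mul, mul_comm]
    _ ≤ ∑ v ∈ C, G.degree v := Finset.sum_le_sum (fun v hv => (hmemC v).mp hv)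
  have hSCval : SC = k + 2 * p := by
    have := hsplitN (fun v => G.degree v)
    rw [hsum, hsumA, hsumB, ← hSCdef] at this
    omega
  have hkp : p ≤ k := by omega
  have hk1 : 1 ≤ k := by
    by_contra h
    have hk0 : A.card = 0 := by omega
    have hp0 : C.card = 0 := by omega
    apply hnotcycle
    intro v
    have hv : v ∈ (A ∪ B) ∪ C := by rw [← huniv]; exact Finset.mem_univ v
    have hA0 : A = ∅ := Finset.card_eq_zero.mp hk0
    have hC0 : C = ∅ := Finset.card_eq_zero.mp hp0
    simp only [hA0, hC0, Finset.union_empty, Finset.empty_union] at hv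
    exact (hmemB v).mp hv
  have hdecomp : degSeq G = Multiset.replicate k 1 + Multiset.replicate b 2
      + C.val.map (fun v => G.degree v) := by
    have hval : (univ : Finset V).val = A.val + B.val + C.val := by
      have h1 : (A ∪ B).val = A.val + B.val := by
        rw [← Finset.disjUnion_eq_union A B hAB]; rfl
      have h2 : ((A ∪ B) ∪ C).val = (A ∪ B).val + C.val := by
        rw [← Finset.disjUnion_eq_union _ C hABC]; rfl
      rw [huniv, h2, h1]
    rw [degSeq, hval, Multiset.map_add, Multiset.map_add]
    congr 1
    congr 1
    · refine Multiset.eq_replicate.mpr ⟨by rw [Multiset.card_map]; exact hk.symm, ?_⟩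
      intro x hx
      obtain ⟨a, ha, rfl⟩ := Multiset.mem_map.mp hx
      exact (hmemA a).mp (Finset.mem_val.mp ha)
    · refine Multiset.eq_replicate.mpr ⟨by rw [Multiset.card_map]; exact hb.symm, ?_⟩
      intro x hx
      obtain ⟨a, ha, rfl⟩ := Multiset.mem_map.mp hx
      exact (hmemB a).mp (Finset.mem_val.mp ha)
  have hp1 : 1 ≤ p := by
    by_contra h0
    have hC0 : C = ∅ := Finset.card_eq_zero.mp (by omega)
    have : SC = 0 := by rw [hSCdef, hC0, Finset.sum_empty]
    omega
  have hk2 : 2 ≤ k := by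
    rcases Nat.lt_or_ge k 2 with h | h
    · exfalso
      have hk1' : k = 1 := by omega
      have hp1' : p = 1 := by omega
      apply hns
      obtain ⟨c, hc⟩ := Finset.card_eq_one.mp (show C.card = 1 by omega)
      have hdc : G.degree c = 3 := by
        have : SC = G.degree c := by rw [hSCdef, hc, Finset.sum_singleton]
        omega
      have hcv : C.val.map (fun v => G.degree v) = {3} := by
        rw [hc]; simp [hdc]
      have hbv : b = n - 2 := by omega
      rw [hdecomp, hcv, hk1', hbv]
      have h1 : (Multiset.replicate 1 1 : Multiset ℕ) = {1} := rfl
      have h31 : ({3,1} : Multiset ℕ) = {3} + {1} := rfl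
      rw [h1, h31]
      ac_rfl
    · exact h
  -- the double sum
  set T := ∑ u : V, ∑ v : V, |(G.degree u : ℤ) - (G.degree v : ℤ)| with hTdef
  have hirr : irrT G = T / 2 := by
    rw [irrT, ← hTdef]
  have hSZ : (∑ v ∈ C, ((G.degree v:ℤ) - 2)) = (k:ℤ) := by
    rw [Finset.sum_sub_distrib, Finset.sum_const, nsmul_eq_mul]
    have hcast : (∑ v ∈ C, ((G.degree v : ℤ))) = (SC:ℤ) := by
      rw [hSCdef]; push_cast; rfl
    rw [hcast, hSCval, ← hp]
    push_cast; ring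
  have hblockAB : ∑ u ∈ A, ∑ v ∈ B, |(G.degree u:ℤ) - (G.degree v:ℤ)| = (k:ℤ) * b := by
    have h1 : ∀ u ∈ A, ∑ v ∈ B, |(G.degree u:ℤ) - (G.degree v:ℤ)| = (b:ℤ) := by
      intro u hu
      have hu1 := (hmemA u).mp hu
      have h2 : ∀ v ∈ B, |(G.degree u:ℤ) - (G.degree v:ℤ)| = 1 := by
        intro v hv
        have hv2 := (hmemB v).mp hv
        rw [hu1, hv2]; norm_num
      rw [Finset.sum_congr rfl h2, Finset.sum_const, nsmul_eq_mul, mul_one, ← hb]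
    rw [Finset.sum_congr rfl h1, Finset.sum_const, nsmul_eq_mul, ← hk]
  have hblockAC : ∑ u ∈ A, ∑ v ∈ C, |(G.degree u:ℤ) - (G.degree v:ℤ)|
      = (k:ℤ) * ((k:ℤ) + (p:ℤ)) := by
    have h1 : ∀ u ∈ A, ∑ v ∈ C, |(G.degree u:ℤ) - (G.degree v:ℤ)| = (k:ℤ) + (p:ℤ) := by
      intro u hu
      have hu1 := (hmemA u).mp hu
      have h2 : ∀ v ∈ C, |(G.degree u:ℤ) - (G.degree v:ℤ)| = ((G.degree v:ℤ) - 2) + 1 := by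
        intro v hv
        have hv3 : (3:ℤ) ≤ (G.degree v : ℤ) := by exact_mod_cast (hmemC v).mp hv
        rw [hu1]
        rw [abs_of_nonpos (by push_cast; linarith)]
        push_cast; ring
      rw [Finset.sum_congr rfl h2, Finset.sum_add_distrib, hSZ, Finset.sum_const,
        nsmul_eq_mul, mul_one, ← hp]
    rw [Finset.sum_congr rfl h1, Finset.sum_const, nsmul_eq_mul, ← hk]
  have hblockBC : ∑ u ∈ B, ∑ v ∈ C, |(G.degree u:ℤ) - (G.degree v:ℤ)|
      = (b:ℤ) * (k:ℤ) := by
    have h1 : ∀ u ∈ B, ∑ v ∈ C, |(G.degree u:ℤ) - (G.degree v:ℤ)| = (k:ℤ) := by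
      intro u hu
      have hu1 := (hmemB u).mp hu
      have h2 : ∀ v ∈ C, |(G.degree u:ℤ) - (G.degree v:ℤ)| = ((G.degree v:ℤ) - 2) := by
        intro v hv
        have hv3 : (3:ℤ) ≤ (G.degree v : ℤ) := by exact_mod_cast (hmemC v).mp hv
        rw [hu1]
        rw [abs_of_nonpos (by push_cast; linarith)]
        push_cast; ring
      rw [Finset.sum_congr rfl h2, hSZ]
    rw [Finset.sum_congr rfl h1, Finset.sum_const, nsmul_eq_mul, ← hb]
  have hsymm : ∀ (s t : Finset V), ∑ u ∈ s, ∑ v ∈ t, |(G.degree u:ℤ) - (G.degree v:ℤ)|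
      = ∑ u ∈ t, ∑ v ∈ s, |(G.degree u:ℤ) - (G.degree v:ℤ)| := by
    intro s t
    rw [Finset.sum_comm]
    apply Finset.sum_congr rfl
    intro v _
    apply Finset.sum_congr rfl
    intro u _
    exact abs_sub_comm _ _
  have hnonneg : ∀ s : Finset V,
      (0:ℤ) ≤ ∑ u ∈ s, ∑ v ∈ s, |(G.degree u:ℤ) - (G.degree v:ℤ)| :=
    fun s => Finset.sum_nonneg fun u _ => Finset.sum_nonneg fun v _ => abs_nonneg _
  have expand : ∀ s : Finset V,
      (∑ u ∈ s, ∑ v : V, |(G.degree u:ℤ) - (G.degree v:ℤ)|)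
      = (∑ u ∈ s, ∑ v ∈ A, |(G.degree u:ℤ) - (G.degree v:ℤ)|)
        + (∑ u ∈ s, ∑ v ∈ B, |(G.degree u:ℤ) - (G.degree v:ℤ)|)
        + (∑ u ∈ s, ∑ v ∈ C, |(G.degree u:ℤ) - (G.degree v:ℤ)|) := by
    intro s
    calc (∑ u ∈ s, ∑ v : V, |(G.degree u:ℤ) - (G.degree v:ℤ)|)
        = ∑ u ∈ s, ((∑ v ∈ A, |(G.degree u:ℤ) - (G.degree v:ℤ)|)
          + (∑ v ∈ B, |(G.degree u:ℤ) - (G.degree v:ℤ)|)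
          + (∑ v ∈ C, |(G.degree u:ℤ) - (G.degree v:ℤ)|)) :=
          Finset.sum_congr rfl (fun u _ => hsplitZ _)
      _ = _ := by rw [Finset.sum_add_distrib, Finset.sum_add_distrib]
  have hT9 : T
      = ((∑ u ∈ A, ∑ v ∈ A, |(G.degree u:ℤ) - (G.degree v:ℤ)|)
        + (∑ u ∈ A, ∑ v ∈ B, |(G.degree u:ℤ) - (G.degree v:ℤ)|)
        + (∑ u ∈ A, ∑ v ∈ C, |(G.degree u:ℤ) - (G.degree v:ℤ)|))
      + ((∑ u ∈ B, ∑ v ∈ A, |(G.degree u:ℤ) - (G.degree v:ℤ)|)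
        + (∑ u ∈ B, ∑ v ∈ B, |(G.degree u:ℤ) - (G.degree v:ℤ)|)
        + (∑ u ∈ B, ∑ v ∈ C, |(G.degree u:ℤ) - (G.degree v:ℤ)|))
      + ((∑ u ∈ C, ∑ v ∈ A, |(G.degree u:ℤ) - (G.degree v:ℤ)|)
        + (∑ u ∈ C, ∑ v ∈ B, |(G.degree u:ℤ) - (G.degree v:ℤ)|)
        + (∑ u ∈ C, ∑ v ∈ C, |(G.degree u:ℤ) - (G.degree v:ℤ)|)) := by
    rw [hTdef, hsplitZ, expand A, expand B, expand C]
  have hBA : ∑ u ∈ B, ∑ v ∈ A, |(G.degree u:ℤ) - (G.degree v:ℤ)| = (k:ℤ) * b := by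
    rw [hsymm]; exact hblockAB
  have hCA : ∑ u ∈ C, ∑ v ∈ A, |(G.degree u:ℤ) - (G.degree v:ℤ)|
      = (k:ℤ) * ((k:ℤ) + (p:ℤ)) := by
    rw [hsymm]; exact hblockAC
  have hCB : ∑ u ∈ C, ∑ v ∈ B, |(G.degree u:ℤ) - (G.degree v:ℤ)| = (b:ℤ) * (k:ℤ) := by
    rw [hsymm]; exact hblockBC
  have hTge : 2*(k:ℤ)*b + 2*(k:ℤ)*((k:ℤ)+(p:ℤ)) + 2*(b:ℤ)*(k:ℤ) ≤ T := by
    rw [hT9, hblockAB, hblockAC, hBA, hblockBC, hCA, hCB]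
    have h1 := hnonneg A
    have h2 := hnonneg B
    have h3 := hnonneg C
    linarith
  have hFle : ((2*(k*b)+k*k+k*p : ℕ) : ℤ) ≤ irrT G := by
    rw [hirr]
    have h2 : ((2*(2*(k*b)+k*k+k*p) : ℕ):ℤ) ≤ T := by push_cast; linarith [hTge]
    calc ((2*(k*b)+k*k+k*p : ℕ):ℤ) = ((2*(2*(k*b)+k*k+k*p):ℕ):ℤ) / 2 := by
          push_cast; omega
      _ ≤ T / 2 := Int.ediv_le_ediv (by norm_num) h2
  obtain ⟨hkey1, hkey2⟩ := arith_key k b p n hk2 hp1 hkp hkbp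
  constructor
  · have : (4*(n:ℤ)) ≤ ((2*(k*b)+k*k+k*p : ℕ) : ℤ) + 8 := by exact_mod_cast hkey1
    linarith [hFle]
  constructor
  · -- equality implies degree sequence
    intro heq
    have hle : ((2*(k*b)+k*k+k*p : ℕ) : ℤ) ≤ 4*(n:ℤ) - 8 := by rw [← heq]; exact hFle
    have hle' : 2*(k*b)+k*k+k*p + 8 ≤ 4*n := by
      have : ((2*(k*b)+k*k+k*p : ℕ) : ℤ) + 8 ≤ 4*(n:ℤ) := by linarith
      exact_mod_cast this
    obtain ⟨hk2', hp2'⟩ := hkey2 hle'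
    have hb' : b = n - 4 := by omega
    have hSC6 : SC = 6 := by omega
    have hdeg3 : ∀ v ∈ C, G.degree v = 3 := by
      intro v hv
      by_contra hne
      have h4 : 4 ≤ G.degree v := by
        have := (hmemC v).mp hv; omega
      have hlt : ∑ _w ∈ C, 3 < ∑ w ∈ C, G.degree w :=
        Finset.sum_lt_sum (fun w hw => (hmemC w).mp hw) ⟨v, hv, by omega⟩
      rw [Finset.sum_const, smul_eq_mul, ← hSCdef] at hlt
      omega
    have hmapC : C.val.map (fun v => G.degree v) = Multiset.replicate 2 3 := by
      refine Multiset.eq_replicate.mpr ⟨?_, ?_⟩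
      · rw [Multiset.card_map, ← Finset.card_def]; omega
      · intro x hx
        obtain ⟨a, ha, rfl⟩ := Multiset.mem_map.mp hx
        exact hdeg3 a (Finset.mem_val.mp ha)
    rw [hdecomp, hmapC, hk2', hb']
    have h3311 : ({3,3,1,1} : Multiset ℕ)
        = Multiset.replicate 2 3 + Multiset.replicate 2 1 := rfl
    rw [h3311]
    ac_rfl
  · -- degree sequence implies equality
    intro hds
    have hTval : T = 8*(((n-4:ℕ)):ℤ) + 16 := by
      rw [hTdef, T_multiset, hds, irr_calc]
    rw [hirr, hTval]
    have h4 : (((n-4:ℕ)):ℤ) = (n:ℤ) - 4 := by omega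
    rw [h4]
    omega
end

section
/- Every bicyclic graph G on n ≥ 7 vertices satisfies irr_t(G) ≥ 2n − 4, with equality if and only if the degree sequence of G is (3, 3, 2, …, 2). -/
open Finset

section key
variable {V : Type*} [Fintype V] [DecidableEq V]

lemma key_ineq (d : V → ℕ) (n : ℕ) (hn : 7 ≤ n)
    (hcard : Fintype.card V = n) (hd1 : ∀ v, 1 ≤ d v)
    (hsum : ∑ v, d v = 2 * n + 2) :
    ((2 * n - 4 : ℤ) ≤ ∑ u : V, ∑ v : V, max ((d v : ℤ) - (d u : ℤ)) 0) ∧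
      ((∑ u : V, ∑ v : V, max ((d v : ℤ) - (d u : ℤ)) 0) = 2 * n - 4 ↔
        Finset.univ.val.map d = Multiset.replicate (n - 2) 2 + {3, 3}) := by
  set A : Finset V := univ.filter (fun v => d v = 1) with hA
  set B : Finset V := univ.filter (fun v => d v = 2) with hB
  set C : Finset V := univ.filter (fun v => 3 ≤ d v) with hC
  set M : ℤ := ∑ u : V, ∑ v : V, max ((d v : ℤ) - (d u : ℤ)) 0 with hM
  -- split of sums over A, B, C
  have hsplit : ∀ f : V → ℤ, ∑ v, f v = ∑ v ∈ A, f v + ∑ v ∈ B, f v + ∑ v ∈ C, f v := by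
    intro f
    have e1 : univ.filter (fun v => ¬ d v ≤ 2) = C := by
      ext v; simp only [hC, mem_filter, mem_univ, true_and]; omega
    have e2 : univ.filter (fun v => d v ≤ 2) = A ∪ B := by
      ext v; simp only [hA, hB, mem_filter, mem_univ, true_and, mem_union]
      have := hd1 v; omega
    have hdisj : Disjoint A B := by
      rw [Finset.disjoint_left]; intro v hv hv'
      simp only [hA, hB, mem_filter] at hv hv'; omega
    rw [← Finset.sum_filter_add_sum_filter_not univ (fun v => d v ≤ 2) f, e1, e2,
      Finset.sum_union hdisj]
  have hcards : (A.card : ℤ) + B.card + C.card = n := by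
    have := hsplit (fun _ => (1 : ℤ))
    simp only [Finset.sum_const, nsmul_eq_mul, mul_one, Finset.card_univ, hcard] at this
    linarith
  have hS : ∑ v : V, (d v : ℤ) = 2 * n + 2 := by
    exact_mod_cast hsum
  have hCsum : ∑ v ∈ C, ((d v : ℤ) - 2) = (A.card : ℤ) + 2 := by
    have h0 : ∑ v : V, ((d v : ℤ) - 2) = 2 := by
      rw [Finset.sum_sub_distrib, hS]
      simp [Finset.card_univ, hcard]; ring
    rw [hsplit (fun v => ((d v : ℤ) - 2))] at h0
    have hA0 : ∑ v ∈ A, ((d v : ℤ) - 2) = -(A.card : ℤ) := by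
      calc ∑ v ∈ A, ((d v : ℤ) - 2) = ∑ _v ∈ A, (-1 : ℤ) := by
            refine Finset.sum_congr rfl (fun v hv => ?_)
            have hv1 : d v = 1 := by simpa [hA] using hv
            rw [hv1]; norm_num
        _ = -(A.card : ℤ) := by simp
    have hB0 : ∑ v ∈ B, ((d v : ℤ) - 2) = 0 := by
      calc ∑ v ∈ B, ((d v : ℤ) - 2) = ∑ _v ∈ B, (0 : ℤ) := by
            refine Finset.sum_congr rfl (fun v hv => ?_)
            have hv1 : d v = 2 := by simpa [hB] using hv
            rw [hv1]; norm_num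
        _ = 0 := by simp
    rw [hA0, hB0] at h0; linarith
  have hqle : (C.card : ℤ) ≤ (A.card : ℤ) + 2 := by
    have : (C.card : ℤ) = ∑ v ∈ C, (1 : ℤ) := by simp
    rw [this, ← hCsum]
    refine Finset.sum_le_sum (fun v hv => ?_)
    have : 3 ≤ d v := by simpa [hC] using hv
    have : (3 : ℤ) ≤ (d v : ℤ) := by exact_mod_cast this
    linarith
  have hinner0 : ∀ u : V, (0:ℤ) ≤ ∑ v : V, max ((d v : ℤ) - (d u : ℤ)) 0 :=
    fun u => Finset.sum_nonneg (fun v _ => le_max_right _ _)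
  have hinner1 : ∀ u ∈ A, ((n : ℤ) + 2) ≤ ∑ v : V, max ((d v : ℤ) - (d u : ℤ)) 0 := by
    intro u hu
    have hdu : d u = 1 := by simpa [hA] using hu
    have h1 : ∑ v : V, ((d v : ℤ) - (d u : ℤ)) = (n : ℤ) + 2 := by
      rw [Finset.sum_sub_distrib, hS, hdu]
      simp [Finset.card_univ, hcard]; ring
    calc ((n : ℤ) + 2) = ∑ v : V, ((d v : ℤ) - (d u : ℤ)) := h1.symm
      _ ≤ ∑ v : V, max ((d v : ℤ) - (d u : ℤ)) 0 :=
        Finset.sum_le_sum (fun v _ => le_max_left _ _)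
  have hinner2 : ∀ u ∈ B, ((A.card : ℤ) + 2) ≤ ∑ v : V, max ((d v : ℤ) - (d u : ℤ)) 0 := by
    intro u hu
    have hdu : d u = 2 := by simpa [hB] using hu
    have h1 : ∑ v ∈ C, max ((d v : ℤ) - (d u : ℤ)) 0 = (A.card : ℤ) + 2 := by
      rw [← hCsum]
      refine Finset.sum_congr rfl (fun v hv => ?_)
      have h3 : 3 ≤ d v := by simpa [hC] using hv
      have h3' : (3:ℤ) ≤ (d v : ℤ) := by exact_mod_cast h3
      rw [hdu, max_eq_left (by push_cast; linarith)]; push_cast; ring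
    calc ((A.card : ℤ) + 2) = ∑ v ∈ C, max ((d v : ℤ) - (d u : ℤ)) 0 := h1.symm
      _ ≤ ∑ v : V, max ((d v : ℤ) - (d u : ℤ)) 0 :=
        Finset.sum_le_sum_of_subset_of_nonneg (Finset.subset_univ C)
          (fun v _ _ => le_max_right _ _)
  have hdisjAB : Disjoint A B := by
    rw [Finset.disjoint_left]; intro v hv hv'
    simp only [hA, hB, mem_filter] at hv hv'; omega
  have hMlow : (A.card : ℤ) * ((n:ℤ) + 2) + (B.card : ℤ) * ((A.card : ℤ) + 2) ≤ M := by
    calc (A.card : ℤ) * ((n:ℤ) + 2) + (B.card : ℤ) * ((A.card : ℤ) + 2)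
        = ∑ _u ∈ A, ((n:ℤ) + 2) + ∑ _u ∈ B, ((A.card : ℤ) + 2) := by
          simp [mul_comm]
      _ ≤ (∑ u ∈ A, ∑ v : V, max ((d v : ℤ) - (d u : ℤ)) 0)
          + ∑ u ∈ B, ∑ v : V, max ((d v : ℤ) - (d u : ℤ)) 0 :=
          add_le_add (Finset.sum_le_sum hinner1) (Finset.sum_le_sum hinner2)
      _ = ∑ u ∈ A ∪ B, ∑ v : V, max ((d v : ℤ) - (d u : ℤ)) 0 :=
          (Finset.sum_union hdisjAB).symm
      _ ≤ ∑ u : V, ∑ v : V, max ((d v : ℤ) - (d u : ℤ)) 0 :=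
          Finset.sum_le_sum_of_subset_of_nonneg (Finset.subset_univ _)
            (fun u _ _ => hinner0 u)
  have hqleN : C.card ≤ A.card + 2 := by exact_mod_cast hqle
  have hCne : A.card = 0 → 1 ≤ C.card := by
    intro hp
    by_contra h
    have hc0 : C = ∅ := Finset.card_eq_zero.mp (by omega)
    rw [hc0] at hCsum
    simp [hp] at hCsum
  have hnZ : (7:ℤ) ≤ (n:ℤ) := by exact_mod_cast hn
  have hstrict : ¬ (A.card = 0 ∧ C.card = 2) → (2 * (n:ℤ) - 3) ≤ M := by
    intro h
    rcases Nat.lt_or_ge A.card 1 with hp | hp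
    · -- A.card = 0, so C.card = 1
      have hp0 : A.card = 0 := by omega
      have hq1 : C.card = 1 := by
        have := hCne hp0
        have := hqleN
        omega
      have hpZ : (A.card : ℤ) = 0 := by exact_mod_cast hp0
      have hqZ : (C.card : ℤ) = 1 := by exact_mod_cast hq1
      rw [hpZ] at hMlow
      ring_nf at hMlow ⊢
      nlinarith [hMlow, hcards]
    · rcases Nat.lt_or_ge A.card 2 with hp2 | hp2
      · -- A.card = 1
        have hp1 : A.card = 1 := by omega
        have hpZ : (A.card : ℤ) = 1 := by exact_mod_cast hp1
        have hqZ : (C.card : ℤ) ≤ 3 := by exact_mod_cast (by omega : C.card ≤ 3)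
        rw [hpZ] at hMlow
        nlinarith [hMlow, hcards, hqZ]
      · -- A.card ≥ 2
        have hpZ : (2:ℤ) ≤ (A.card : ℤ) := by exact_mod_cast hp2
        have hB0 : (0:ℤ) ≤ (B.card : ℤ) := by positivity
        nlinarith [hMlow, hpZ, hB0, hnZ]
  -- structure in the equality case
  have hQ : A.card = 0 → C.card = 2 →
      (∀ v, d v = 2 ∨ d v = 3) ∧ univ.filter (fun v => d v = 3) = C := by
    intro hp0 hq2
    obtain ⟨a, b, hab, hCab⟩ := Finset.card_eq_two.mp hq2
    have ha : a ∈ C := by rw [hCab]; simp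
    have hb : b ∈ C := by rw [hCab]; simp
    have ha3 : 3 ≤ d a := by simpa [hC] using ha
    have hb3 : 3 ≤ d b := by simpa [hC] using hb
    have hsum2 : ((d a : ℤ) - 2) + ((d b : ℤ) - 2) = 2 := by
      have := hCsum
      rw [hCab, Finset.sum_pair hab] at this
      rw [this, hp0]; norm_num
    have hda : d a = 3 := by omega
    have hdb : d b = 3 := by omega
    have hall : ∀ v, d v = 2 ∨ d v = 3 := by
      intro v
      by_cases hv : v ∈ C
      · rw [hCab] at hv
        rcases Finset.mem_insert.mp hv with h | h
        · right; rw [h]; exact hda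
        · right; rw [Finset.mem_singleton.mp h]; exact hdb
      · have h2 : ¬ 3 ≤ d v := by simpa [hC] using hv
        have h1 : v ∉ A := by
          rw [Finset.card_eq_zero.mp hp0]; exact Finset.notMem_empty v
        have h1' : ¬ d v = 1 := by simpa [hA] using h1
        have := hd1 v
        left; omega
    refine ⟨hall, ?_⟩
    ext v
    simp only [hC, mem_filter, mem_univ, true_and]
    rcases hall v with h | h <;> omega
  -- exact computation of M when all degrees are 2 or 3 with exactly two 3's
  have hcomp : (∀ v, d v = 2 ∨ d v = 3) → (univ.filter (fun v => d v = 3)).card = 2 →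
      M = 2 * (n:ℤ) - 4 := by
    intro hall hc3
    have hc2 : (univ.filter (fun v => d v = 2)).card = n - 2 := by
      have he : univ.filter (fun v => ¬ d v = 3) = univ.filter (fun v => d v = 2) := by
        ext v; simp only [mem_filter, mem_univ, true_and]
        rcases hall v with h | h <;> omega
      have := Finset.card_filter_add_card_filter_not
        (s := univ) (p := fun v => d v = 3)
      rw [he] at this
      rw [Finset.card_univ, hcard] at this
      omega
    have hMeq : M = (∑ u : V, if d u = 2 then (1:ℤ) else 0)
        * (∑ v : V, if d v = 3 then (1:ℤ) else 0) := by
      rw [hM, Finset.sum_mul_sum]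
      refine Finset.sum_congr rfl (fun u _ => Finset.sum_congr rfl (fun v _ => ?_))
      rcases hall u with h | h <;> rcases hall v with h' | h' <;>
        simp [h, h'] <;> norm_num
    rw [hMeq, Finset.sum_boole, Finset.sum_boole, hc2, hc3]
    have : ((n - 2 : ℕ) : ℤ) = (n:ℤ) - 2 := by
      have : 2 ≤ n := by omega
      push_cast [this]; ring
    rw [this]; push_cast; ring
  -- multiset characterization
  have hcount : ∀ k : ℕ, Multiset.count k (Finset.univ.val.map d)
      = (univ.filter (fun v => d v = k)).card := by
    intro k
    rw [Multiset.count_map]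
    have : Multiset.filter (fun a => k = d a) univ.val
        = (univ.filter (fun v => k = d v)).val := by
      rw [Finset.filter_val]
    rw [this]
    have : (univ.filter (fun v => k = d v)) = (univ.filter (fun v => d v = k)) := by
      ext v; simp [eq_comm]
    rw [this]
    rfl
  have hmul_of : (∀ v, d v = 2 ∨ d v = 3) → (univ.filter (fun v => d v = 3)).card = 2 →
      Finset.univ.val.map d = Multiset.replicate (n - 2) 2 + {3, 3} := by
    intro hall hc3
    have hc2 : (univ.filter (fun v => d v = 2)).card = n - 2 := by
      have he : univ.filter (fun v => ¬ d v = 3) = univ.filter (fun v => d v = 2) := by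
        ext v; simp only [mem_filter, mem_univ, true_and]
        rcases hall v with h | h <;> omega
      have := Finset.card_filter_add_card_filter_not
        (s := univ) (p := fun v => d v = 3)
      rw [he] at this
      rw [Finset.card_univ, hcard] at this
      omega
    rw [Multiset.ext]
    intro k
    rw [hcount k, Multiset.count_add, Multiset.count_replicate]
    have h33 : Multiset.count k ({3, 3} : Multiset ℕ) = if k = 3 then 2 else 0 := by
      by_cases h : k = 3 <;> simp [h, Multiset.count_cons, Multiset.count_singleton]
    rw [h33]
    by_cases h2 : k = 2
    · subst h2; simp [hc2]
    · by_cases h3 : k = 3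
      · subst h3; simp [hc3]
      · have : univ.filter (fun v => d v = k) = ∅ := by
          ext v; simp only [mem_filter, mem_univ, true_and, Finset.notMem_empty, iff_false]
          rcases hall v with h | h <;> omega
        simp [this, h3, show ¬(2=k) from fun h => h2 h.symm]
  have hof_mul : Finset.univ.val.map d = Multiset.replicate (n - 2) 2 + {3, 3} →
      (∀ v, d v = 2 ∨ d v = 3) ∧ (univ.filter (fun v => d v = 3)).card = 2 := by
    intro h
    constructor
    · intro v
      have hv : d v ∈ Finset.univ.val.map d :=
        Multiset.mem_map_of_mem d (Finset.mem_univ v)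
      rw [h] at hv
      rcases Multiset.mem_add.mp hv with h' | h'
      · left; exact Multiset.eq_of_mem_replicate h'
      · right
        rcases Multiset.mem_cons.mp h' with h'' | h''
        · exact h''
        · simpa using h''
    · have := hcount 3
      rw [h] at this
      rw [← this]
      rw [Multiset.count_add, Multiset.count_replicate]
      simp
  -- assembly
  have hMeq_of : A.card = 0 → C.card = 2 → M = 2 * (n:ℤ) - 4 := by
    intro hp0 hq2
    obtain ⟨hall, hfc⟩ := hQ hp0 hq2
    exact hcomp hall (by rw [hfc]; exact hq2)
  constructor
  · by_cases hpq : A.card = 0 ∧ C.card = 2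
    · exact le_of_eq (hMeq_of hpq.1 hpq.2).symm
    · linarith [hstrict hpq]
  · constructor
    · intro hMe
      by_cases hpq : A.card = 0 ∧ C.card = 2
      · obtain ⟨hall, hfc⟩ := hQ hpq.1 hpq.2
        exact hmul_of hall (by rw [hfc]; exact hpq.2)
      · exfalso; linarith [hstrict hpq]
    · intro h
      obtain ⟨hall, hfc⟩ := hof_mul h
      exact hcomp hall hfc

end key

theorem bicyclic_min_irrT {V : Type*} [Fintype V] (G : SimpleGraph V)
    [DecidableRel G.Adj]
    (hconn : G.Connected) (n : ℕ) (hn : 7 ≤ n) (hcard : Fintype.card V = n)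
    (hedges : G.edgeFinset.card = n + 1) :
    2 * n - 4 ≤ irrT G ∧
      (irrT G = 2 * n - 4 ↔ degSeq G = Multiset.replicate (n - 2) 2 + {3, 3}) := by
  classical
  set d : V → ℕ := fun v => G.degree v with hd
  have hd1 : ∀ v, 1 ≤ d v := by
    intro v
    have v2 : 1 < Fintype.card V := by omega
    obtain ⟨w, hw⟩ := Fintype.exists_ne_of_one_lt_card v2 v
    obtain ⟨p⟩ := hconn.preconnected v w
    cases p with
    | nil => exact (hw rfl).elim
    | cons h q =>
      exact (SimpleGraph.degree_pos_iff_exists_adj G v).mpr ⟨_, h⟩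
  have hsum : ∑ v, d v = 2 * n + 2 := by
    rw [hd]
    rw [G.sum_degrees_eq_twice_card_edges, hedges]
    ring
  obtain ⟨h1, h2⟩ := key_ineq d n hn hcard hd1 hsum
  have habs : ∀ a b : ℤ, |a - b| = (a - b) + 2 * max (b - a) 0 := by
    intro a b
    rcases le_total b a with h | h
    · rw [abs_of_nonneg (by linarith), max_eq_right (by linarith)]; ring
    · rw [abs_of_nonpos (by linarith), max_eq_left (by linarith)]; ring
  have hzero : ∑ u : V, ∑ v : V, ((d u : ℤ) - (d v : ℤ)) = 0 := by
    have h1 : ∑ u : V, ∑ v : V, ((d u : ℤ) - (d v : ℤ))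
        = ∑ v : V, ∑ u : V, ((d u : ℤ) - (d v : ℤ)) := Finset.sum_comm
    have h2 : (∑ u : V, ∑ v : V, ((d u : ℤ) - (d v : ℤ)))
        + ∑ v : V, ∑ u : V, ((d u : ℤ) - (d v : ℤ)) = 0 := by
      rw [← Finset.sum_add_distrib]
      rw [show (fun u => (∑ v : V, ((d u : ℤ) - (d v : ℤ))) + ∑ v : V, ((d v : ℤ) - (d u : ℤ)))
        = fun u => ∑ v : V, (((d u : ℤ) - (d v : ℤ)) + ((d v : ℤ) - (d u : ℤ))) from
          funext fun u => (Finset.sum_add_distrib).symm]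
      simp
    linarith [h1 ▸ h2]
  have hT : (∑ u : V, ∑ v : V, |(d u : ℤ) - (d v : ℤ)|)
      = 2 * ∑ u : V, ∑ v : V, max ((d v : ℤ) - (d u : ℤ)) 0 := by
    calc ∑ u : V, ∑ v : V, |(d u : ℤ) - (d v : ℤ)|
        = ∑ u : V, ∑ v : V, (((d u : ℤ) - (d v : ℤ)) + 2 * max ((d v : ℤ) - (d u : ℤ)) 0) := by
          refine Finset.sum_congr rfl fun u _ => Finset.sum_congr rfl fun v _ => habs _ _
      _ = (∑ u : V, ∑ v : V, ((d u : ℤ) - (d v : ℤ)))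
          + ∑ u : V, ∑ v : V, 2 * max ((d v : ℤ) - (d u : ℤ)) 0 := by
          rw [← Finset.sum_add_distrib]
          refine Finset.sum_congr rfl fun u _ => Finset.sum_add_distrib
      _ = 2 * ∑ u : V, ∑ v : V, max ((d v : ℤ) - (d u : ℤ)) 0 := by
          rw [hzero, Finset.mul_sum]
          simp [Finset.mul_sum]
  have hirr : irrT G = ∑ u : V, ∑ v : V, max ((d v : ℤ) - (d u : ℤ)) 0 := by
    unfold irrT
    rw [show (∑ u : V, ∑ v : V, |(G.degree u : ℤ) - (G.degree v : ℤ)|)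
      = ∑ u : V, ∑ v : V, |(d u : ℤ) - (d v : ℤ)| from rfl, hT]
    omega
  have hds : degSeq G = Finset.univ.val.map d := rfl
  rw [hirr, hds]
  exact ⟨h1, h2⟩
end

section
/- Let G be a bicyclic graph on n ≥ 7 vertices whose degree sequence is neither (3,3,2,…,2) nor (4,2,…,2). Then irr_t(G) ≥ 4n − 10, with equality if and only if the degree sequence of G is (3, 3, 3, 2, …, 2, 1). -/
open Finset

lemma all_eq_one {V : Type*} [DecidableEq V] {C : Finset V} {e : V → ℤ}
    (h1 : ∀ v ∈ C, 1 ≤ e v) (h2 : ∑ v ∈ C, e v = C.card) : ∀ v ∈ C, e v = 1 := by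
  intro v hv
  by_contra hne
  have h2v : 2 ≤ e v := by have := h1 v hv; omega
  have hsum' : (∑ x ∈ C.erase v, e x) + e v = ∑ x ∈ C, e x := Finset.sum_erase_add _ _ hv
  have hge : ((C.erase v).card : ℤ) ≤ ∑ x ∈ C.erase v, e x := by
    have := Finset.card_nsmul_le_sum (C.erase v) e 1
      (fun x hx => h1 x (Finset.mem_of_mem_erase hx))
    simpa using this
  have hcard : (C.erase v).card = C.card - 1 := Finset.card_erase_of_mem hv
  have hc1 : 1 ≤ C.card := Finset.card_pos.mpr ⟨v, hv⟩
  rw [hcard] at hge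
  omega

lemma count_map_univ {V : Type*} [Fintype V] (d : V → ℕ) (a : ℕ) :
    (Multiset.map d Finset.univ.val).count a
      = (Finset.univ.filter (fun v => d v = a)).card := by
  classical
  rw [Multiset.count_map]
  rw [show (Finset.univ.filter (fun v => d v = a)).card
      = Multiset.card (Multiset.filter (fun v => d v = a) Finset.univ.val) by
    rw [← Finset.filter_val]; rfl]
  congr 1
  exact Multiset.filter_congr (fun x _ => by constructor <;> exact fun h => h.symm)

lemma degseq_eq {V : Type*} [Fintype V] (d : V → ℕ) (m c t s : ℕ) (ht3 : 3 ≤ t)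
    (hm : (Finset.univ.filter (fun v => d v = 2)).card = m)
    (hc : (Finset.univ.filter (fun v => d v = t)).card = c)
    (hs : (Finset.univ.filter (fun v => d v = 1)).card = s)
    (hother : ∀ a : ℕ, a ≠ 1 → a ≠ 2 → a ≠ t →
      (Finset.univ.filter (fun v => d v = a)).card = 0) :
    Multiset.map d Finset.univ.val
      = Multiset.replicate m 2 + Multiset.replicate c t + Multiset.replicate s 1 := by
  ext a
  rw [count_map_univ]
  simp only [Multiset.count_add, Multiset.count_replicate]
  by_cases ha1 : a = 1
  · subst ha1
    rw [hs]
    have ht1 : ¬ (t = 1) := by omega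
    simp [ht1]
  by_cases ha2 : a = 2
  · subst ha2
    rw [hm]
    have ht2 : ¬ (t = 2) := by omega
    simp [ht2]
  by_cases hat : a = t
  · subst hat
    rw [hc]
    have : ¬ (2 = a) := by omega
    have h1' : ¬ (1 = a) := by omega
    simp [this, h1']
  · rw [hother a ha1 ha2 hat]
    have e2 : ¬ (2 = a) := fun h => ha2 h.symm
    have et : ¬ (t = a) := fun h => hat h.symm
    have e1 : ¬ (1 = a) := fun h => ha1 h.symm
    simp [e1, e2, et]


lemma arith_ge (s k nn : ℤ) (hs : 1 ≤ s) (hk : 1 ≤ k) (hks : k ≤ s + 2)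
    (hkn : 0 ≤ nn - s - k) (hn : 7 ≤ nn) :
    8 * nn - 20 ≤ 2 * (s * (nn - s - k)) + 2 * (s * ((s + 2) + k)) + 2 * ((nn - s - k) * (s + 2)) := by
  have hcases : s = 1 ∨ s = 2 ∨ s = 3 ∨ 4 ≤ s := by omega
  rcases hcases with h | h | h | h
  · subst h; linarith
  · subst h; linarith
  · subst h; linarith
  · nlinarith [mul_nonneg (by linarith : (0:ℤ) ≤ s - 4) (by linarith : (0:ℤ) ≤ nn - 7),
      mul_nonneg hkn (by linarith : (0:ℤ) ≤ s + 2)]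

lemma arith_eq (s k nn : ℤ) (hs : 1 ≤ s) (hk : 1 ≤ k) (hks : k ≤ s + 2)
    (hkn : 0 ≤ nn - s - k) (hn : 7 ≤ nn)
    (hle : 2 * (s * (nn - s - k)) + 2 * (s * ((s + 2) + k)) + 2 * ((nn - s - k) * (s + 2))
      ≤ 8 * nn - 19) :
    s = 1 ∧ k = 3 := by
  have hcases : s = 1 ∨ s = 2 ∨ s = 3 ∨ 4 ≤ s := by omega
  rcases hcases with h | h | h | h
  · subst h
    refine ⟨rfl, ?_⟩
    nlinarith
  · exfalso; subst h; nlinarith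
  · exfalso; subst h; nlinarith
  · exfalso
    nlinarith [mul_nonneg (by linarith : (0:ℤ) ≤ s - 4) (by linarith : (0:ℤ) ≤ nn - 7),
      mul_nonneg hkn (by linarith : (0:ℤ) ≤ s + 2)]

lemma core_s17 {V : Type*} [Fintype V] (d : V → ℕ) (n : ℕ) (hn : 7 ≤ n)
    (hcardV : Fintype.card V = n)
    (hdeg : ∀ v, 1 ≤ d v)
    (hsum : ∑ v, (d v : ℤ) = 2 * n + 2)
    (h1 : Multiset.map d Finset.univ.val ≠ Multiset.replicate (n - 2) 2 + {3, 3})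
    (h2 : Multiset.map d Finset.univ.val ≠ Multiset.replicate (n - 1) 2 + {4}) :
    ((8 : ℤ) * n - 20 ≤ ∑ u, ∑ v, |(d u : ℤ) - d v|) ∧
      ((∑ u, ∑ v, |(d u : ℤ) - d v|) ≤ 8 * n - 19 →
        (∑ u, ∑ v, |(d u : ℤ) - d v|) = 8 * n - 20 ∧
          Multiset.map d Finset.univ.val = Multiset.replicate (n - 4) 2 + {3, 3, 3, 1}) ∧
      (Multiset.map d Finset.univ.val = Multiset.replicate (n - 4) 2 + {3, 3, 3, 1} →
        (∑ u, ∑ v, |(d u : ℤ) - d v|) = 8 * n - 20) := by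
  classical
  set A := Finset.univ.filter (fun v => d v = 1) with hAdef
  set B := Finset.univ.filter (fun v => d v = 2) with hBdef
  set C := Finset.univ.filter (fun v => 3 ≤ d v) with hCdef
  have hmemA : ∀ v ∈ A, d v = 1 := fun v hv => (Finset.mem_filter.mp hv).2
  have hmemB : ∀ v ∈ B, d v = 2 := fun v hv => (Finset.mem_filter.mp hv).2
  have hmemC : ∀ v ∈ C, 3 ≤ d v := fun v hv => (Finset.mem_filter.mp hv).2
  have hdisjBC : Disjoint B C := by
    rw [Finset.disjoint_left]
    intro v hvB hvC
    have := hmemB v hvB; have := hmemC v hvC; omega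
  have hBC : Finset.univ.filter (fun v => ¬ d v = 1) = B ∪ C := by
    ext v
    simp only [hBdef, hCdef, Finset.mem_filter, Finset.mem_union, Finset.mem_univ, true_and]
    have := hdeg v; omega
  have hsplit : ∀ f : V → ℤ, ∑ v, f v = ∑ v ∈ A, f v + ∑ v ∈ B, f v + ∑ v ∈ C, f v := by
    intro f
    rw [← Finset.sum_filter_add_sum_filter_not Finset.univ (fun v => d v = 1) f, hBC,
      Finset.sum_union hdisjBC, ← add_assoc]
  -- cardinalities
  have hcards : (A.card : ℤ) + B.card + C.card = n := by
    have h := hsplit (fun _ => (1 : ℤ))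
    simp only [Finset.sum_const, nsmul_eq_mul, mul_one, Finset.card_univ, hcardV] at h
    exact_mod_cast h.symm
  -- sums over parts
  have hA1 : ∑ v ∈ A, (d v : ℤ) = A.card := by
    calc ∑ v ∈ A, (d v : ℤ) = ∑ v ∈ A, 1 :=
          Finset.sum_congr rfl (fun v hv => by rw [hmemA v hv]; norm_num)
      _ = A.card := by simp
  have hB2 : ∑ v ∈ B, (d v : ℤ) = 2 * B.card := by
    calc ∑ v ∈ B, (d v : ℤ) = ∑ v ∈ B, 2 :=
          Finset.sum_congr rfl (fun v hv => by rw [hmemB v hv]; norm_num)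
      _ = 2 * B.card := by rw [Finset.sum_const, nsmul_eq_mul, mul_comm]
  set E := ∑ v ∈ C, ((d v : ℤ) - 2) with hEdef
  have hCE : ∑ v ∈ C, (d v : ℤ) = E + 2 * C.card := by
    rw [hEdef, Finset.sum_sub_distrib]
    rw [Finset.sum_const, nsmul_eq_mul, mul_comm]
    ring
  have hE : E = A.card + 2 := by
    have h := hsplit (fun v => (d v : ℤ))
    rw [hsum, hA1, hB2, hCE] at h
    linarith [hcards]
  have hkE : (C.card : ℤ) ≤ E := by
    rw [hEdef]
    calc (C.card : ℤ) = ∑ v ∈ C, (1 : ℤ) := by simp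
      _ ≤ _ := Finset.sum_le_sum (fun v hv => by have := hmemC v hv; push_cast; omega)
  have hk1 : 1 ≤ C.card := by
    rcases Nat.eq_zero_or_pos C.card with h | h
    · exfalso
      have hCe : C = ∅ := Finset.card_eq_zero.mp h
      rw [hEdef, hCe] at hE
      simp at hE
      omega
    · exact h
  have habsAB : ∀ u ∈ A, ∀ v ∈ B, |(d u : ℤ) - d v| = 1 := by
    intro u hu v hv; rw [hmemA u hu, hmemB v hv]; norm_num
  have habsAC : ∀ u ∈ A, ∀ v ∈ C, |(d u : ℤ) - d v| = (d v : ℤ) - 1 := by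
    intro u hu v hv
    have := hmemC v hv
    rw [hmemA u hu]
    rw [abs_of_nonpos (by push_cast; omega)]
    ring
  have habsBC : ∀ u ∈ B, ∀ v ∈ C, |(d u : ℤ) - d v| = (d v : ℤ) - 2 := by
    intro u hu v hv
    have := hmemC v hv
    rw [hmemB u hu]
    rw [abs_of_nonpos (by push_cast; omega)]
    ring
  have hsumC1 : ∑ v ∈ C, ((d v : ℤ) - 1) = E + C.card := by
    have : ∀ v ∈ C, (d v : ℤ) - 1 = ((d v : ℤ) - 2) + 1 := fun v _ => by ring
    rw [Finset.sum_congr rfl this, Finset.sum_add_distrib, ← hEdef]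
    simp
  have hAA : ∑ u ∈ A, ∑ v ∈ A, |(d u : ℤ) - d v| = 0 :=
    Finset.sum_eq_zero fun u hu => Finset.sum_eq_zero fun v hv => by
      rw [hmemA u hu, hmemA v hv]; simp
  have hBB : ∑ u ∈ B, ∑ v ∈ B, |(d u : ℤ) - d v| = 0 :=
    Finset.sum_eq_zero fun u hu => Finset.sum_eq_zero fun v hv => by
      rw [hmemB u hu, hmemB v hv]; simp
  have hAB : ∑ u ∈ A, ∑ v ∈ B, |(d u : ℤ) - d v| = (A.card : ℤ) * B.card := by
    calc ∑ u ∈ A, ∑ v ∈ B, |(d u : ℤ) - d v| = ∑ _u ∈ A, (B.card : ℤ) :=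
          Finset.sum_congr rfl (fun u hu => by
            calc ∑ v ∈ B, |(d u : ℤ) - d v| = ∑ v ∈ B, 1 :=
                  Finset.sum_congr rfl (fun v hv => habsAB u hu v hv)
              _ = (B.card : ℤ) := by simp)
      _ = (A.card : ℤ) * B.card := by rw [Finset.sum_const, nsmul_eq_mul]
  have hBA : ∑ u ∈ B, ∑ v ∈ A, |(d u : ℤ) - d v| = (A.card : ℤ) * B.card := by
    calc ∑ u ∈ B, ∑ v ∈ A, |(d u : ℤ) - d v| = ∑ _u ∈ B, (A.card : ℤ) :=
          Finset.sum_congr rfl (fun u hu => by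
            calc ∑ v ∈ A, |(d u : ℤ) - d v| = ∑ v ∈ A, 1 :=
                  Finset.sum_congr rfl (fun v hv => by
                    rw [abs_sub_comm]; exact habsAB v hv u hu)
              _ = (A.card : ℤ) := by simp)
      _ = (A.card : ℤ) * B.card := by rw [Finset.sum_const, nsmul_eq_mul, mul_comm]
  have hAC : ∑ u ∈ A, ∑ v ∈ C, |(d u : ℤ) - d v| = (A.card : ℤ) * (E + C.card) := by
    calc ∑ u ∈ A, ∑ v ∈ C, |(d u : ℤ) - d v| = ∑ _u ∈ A, (E + (C.card : ℤ)) :=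
          Finset.sum_congr rfl (fun u hu => by
            calc ∑ v ∈ C, |(d u : ℤ) - d v| = ∑ v ∈ C, ((d v : ℤ) - 1) :=
                  Finset.sum_congr rfl (fun v hv => habsAC u hu v hv)
              _ = E + (C.card : ℤ) := hsumC1)
      _ = (A.card : ℤ) * (E + C.card) := by rw [Finset.sum_const, nsmul_eq_mul]
  have hCA : ∑ u ∈ C, ∑ v ∈ A, |(d u : ℤ) - d v| = (A.card : ℤ) * (E + C.card) := by
    calc ∑ u ∈ C, ∑ v ∈ A, |(d u : ℤ) - d v|
        = ∑ u ∈ C, (A.card : ℤ) * ((d u : ℤ) - 1) :=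
          Finset.sum_congr rfl (fun u hu => by
            calc ∑ v ∈ A, |(d u : ℤ) - d v| = ∑ _v ∈ A, ((d u : ℤ) - 1) :=
                  Finset.sum_congr rfl (fun v hv => by
                    rw [abs_sub_comm]; exact habsAC v hv u hu)
              _ = (A.card : ℤ) * ((d u : ℤ) - 1) := by
                  rw [Finset.sum_const, nsmul_eq_mul])
      _ = (A.card : ℤ) * (E + C.card) := by rw [← Finset.mul_sum, hsumC1]
  have hBCb : ∑ u ∈ B, ∑ v ∈ C, |(d u : ℤ) - d v| = (B.card : ℤ) * E := by
    calc ∑ u ∈ B, ∑ v ∈ C, |(d u : ℤ) - d v| = ∑ _u ∈ B, E :=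
          Finset.sum_congr rfl (fun u hu => by
            calc ∑ v ∈ C, |(d u : ℤ) - d v| = ∑ v ∈ C, ((d v : ℤ) - 2) :=
                  Finset.sum_congr rfl (fun v hv => habsBC u hu v hv)
              _ = E := hEdef.symm)
      _ = (B.card : ℤ) * E := by rw [Finset.sum_const, nsmul_eq_mul]
  have hCBb : ∑ u ∈ C, ∑ v ∈ B, |(d u : ℤ) - d v| = (B.card : ℤ) * E := by
    calc ∑ u ∈ C, ∑ v ∈ B, |(d u : ℤ) - d v|
        = ∑ u ∈ C, (B.card : ℤ) * ((d u : ℤ) - 2) :=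
          Finset.sum_congr rfl (fun u hu => by
            calc ∑ v ∈ B, |(d u : ℤ) - d v| = ∑ _v ∈ B, ((d u : ℤ) - 2) :=
                  Finset.sum_congr rfl (fun v hv => by
                    rw [abs_sub_comm]; exact habsBC v hv u hu)
              _ = (B.card : ℤ) * ((d u : ℤ) - 2) := by
                  rw [Finset.sum_const, nsmul_eq_mul])
      _ = (B.card : ℤ) * E := by rw [← Finset.mul_sum, ← hEdef]
  set TCC := ∑ u ∈ C, ∑ v ∈ C, |(d u : ℤ) - d v| with hTCCdef
  have hTCC0 : 0 ≤ TCC :=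
    Finset.sum_nonneg fun u _ => Finset.sum_nonneg fun v _ => abs_nonneg _
  -- main decomposition
  have hT : (∑ u, ∑ v, |(d u : ℤ) - d v|)
      = 2 * ((A.card : ℤ) * B.card) + 2 * ((A.card : ℤ) * (E + C.card))
        + 2 * ((B.card : ℤ) * E) + TCC := by
    rw [hsplit (fun u => ∑ v, |(d u : ℤ) - d v|)]
    rw [Finset.sum_congr rfl (fun u _ => hsplit (fun v => |(d u : ℤ) - d v|)),
        Finset.sum_congr rfl (fun u (_ : u ∈ B) => hsplit (fun v => |(d u : ℤ) - d v|)),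
        Finset.sum_congr rfl (fun u (_ : u ∈ C) => hsplit (fun v => |(d u : ℤ) - d v|))]
    rw [Finset.sum_add_distrib, Finset.sum_add_distrib, Finset.sum_add_distrib,
        Finset.sum_add_distrib, Finset.sum_add_distrib, Finset.sum_add_distrib]
    rw [hAA, hBB, hAB, hBA, hAC, hCA, hBCb, hCBb]
    ring
  -- membership characterizations
  have hmemA' : ∀ v, v ∈ A ↔ d v = 1 := fun v => by rw [hAdef]; simp
  have hmemB' : ∀ v, v ∈ B ↔ d v = 2 := fun v => by rw [hBdef]; simp
  have hmemC' : ∀ v, v ∈ C ↔ 3 ≤ d v := fun v => by rw [hCdef]; simp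
  have hn7 : (7 : ℤ) ≤ n := by exact_mod_cast hn
  have hkE' : (C.card : ℤ) ≤ (A.card : ℤ) + 2 := by rw [hE] at hkE; exact hkE
  have h1k : (1 : ℤ) ≤ C.card := by exact_mod_cast hk1
  -- A is nonempty
  have hspos : 1 ≤ A.card := by
    by_contra hcon
    have hA0 : A.card = 0 := by omega
    have hE2 : E = 2 := by rw [hE, hA0]; norm_num
    have hk12 : C.card = 1 ∨ C.card = 2 := by
      rw [hE2] at hkE
      omega
    have hfil1 : (Finset.univ.filter (fun v => d v = 1)).card = 0 := by
      rw [← hAdef]; exact hA0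
    rcases hk12 with hk | hk
    · -- one vertex of degree 4
      obtain ⟨c, hc⟩ := Finset.card_eq_one.mp hk
      have hdc : d c = 4 := by
        have h4 : E = (d c : ℤ) - 2 := by
          rw [hEdef, hc]; simp
        rw [hE2] at h4
        omega
      have hd4 : ∀ v, 3 ≤ d v → d v = 4 := by
        intro v hv3
        have hvC : v ∈ C := (hmemC' v).mpr hv3
        rw [hc, Finset.mem_singleton] at hvC
        rw [hvC, hdc]
      have hBcard : B.card = n - 1 := by omega
      have hfil2 : (Finset.univ.filter (fun v => d v = 2)).card = n - 1 := by
        rw [← hBdef]; exact hBcard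
      have hfil4 : (Finset.univ.filter (fun v => d v = 4)).card = 1 := by
        have hCeq : Finset.univ.filter (fun v => d v = 4) = C := by
          apply Finset.ext; intro v
          rw [hmemC' v]
          simp only [Finset.mem_filter, Finset.mem_univ, true_and]
          exact ⟨fun h => by omega, fun h => hd4 v h⟩
        rw [hCeq, hk]
      have hother : ∀ a : ℕ, a ≠ 1 → a ≠ 2 → a ≠ 4 →
          (Finset.univ.filter (fun v => d v = a)).card = 0 := by
        intro a ha1 ha2 ha4
        rw [Finset.card_eq_zero, Finset.filter_eq_empty_iff]
        intro v _ hva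
        have h1v := hdeg v
        rcases le_or_gt 3 (d v) with h3 | h3
        · have := hd4 v h3; omega
        · omega
      apply h2
      rw [degseq_eq d (n - 1) 1 4 0 (by norm_num) hfil2 hfil4 hfil1 hother, add_assoc]
      congr 1
    · -- two vertices of degree 3
      have hall3 : ∀ v ∈ C, d v = 3 := by
        intro v hv
        have h := all_eq_one (C := C) (e := fun v => (d v : ℤ) - 2)
          (fun w hw => by have := hmemC w hw; show (1:ℤ) ≤ (d w : ℤ) - 2; omega)
          (by rw [← hEdef, hE2, hk]; norm_num) v hv
        have h' : (d v : ℤ) - 2 = 1 := h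
        omega
      have hBcard : B.card = n - 2 := by omega
      have hfil2 : (Finset.univ.filter (fun v => d v = 2)).card = n - 2 := by
        rw [← hBdef]; exact hBcard
      have hfil3 : (Finset.univ.filter (fun v => d v = 3)).card = 2 := by
        have hCeq : Finset.univ.filter (fun v => d v = 3) = C := by
          apply Finset.ext; intro v
          rw [hmemC' v]
          simp only [Finset.mem_filter, Finset.mem_univ, true_and]
          exact ⟨fun h => by omega, fun h => hall3 v ((hmemC' v).mpr h)⟩
        rw [hCeq, hk]
      have hother : ∀ a : ℕ, a ≠ 1 → a ≠ 2 → a ≠ 3 →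
          (Finset.univ.filter (fun v => d v = a)).card = 0 := by
        intro a ha1 ha2 ha3
        rw [Finset.card_eq_zero, Finset.filter_eq_empty_iff]
        intro v _ hva
        have h1v := hdeg v
        rcases le_or_gt 3 (d v) with h3 | h3
        · have := hall3 v ((hmemC' v).mpr h3); omega
        · omega
      apply h1
      rw [degseq_eq d (n - 2) 2 3 0 (by norm_num) hfil2 hfil3 hfil1 hother, add_assoc]
      congr 1
  have hsZ : (1 : ℤ) ≤ A.card := by exact_mod_cast hspos
  have hm' : (B.card : ℤ) = (n : ℤ) - A.card - C.card := by omega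
  have hmpos : (0 : ℤ) ≤ (n : ℤ) - A.card - C.card := by
    rw [← hm']; exact Nat.cast_nonneg _
  have hbase_ge : 8 * (n : ℤ) - 20 ≤
      2 * ((A.card : ℤ) * B.card) + 2 * ((A.card : ℤ) * (E + C.card))
        + 2 * ((B.card : ℤ) * E) := by
    rw [hm', hE]
    exact arith_ge _ _ _ hsZ h1k hkE' hmpos hn7
  have heqc : 2 * ((A.card : ℤ) * B.card) + 2 * ((A.card : ℤ) * (E + C.card))
        + 2 * ((B.card : ℤ) * E) ≤ 8 * (n : ℤ) - 19 → A.card = 1 ∧ C.card = 3 := by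
    intro hle
    rw [hm', hE] at hle
    have h := arith_eq _ _ _ hsZ h1k hkE' hmpos hn7 hle
    exact ⟨by omega, by omega⟩
  refine ⟨?_, ?_, ?_⟩
  · rw [hT]; linarith [hbase_ge, hTCC0]
  · intro hle
    have hbase_le : 2 * ((A.card : ℤ) * B.card) + 2 * ((A.card : ℤ) * (E + C.card))
        + 2 * ((B.card : ℤ) * E) ≤ 8 * (n : ℤ) - 19 := by
      rw [hT] at hle; linarith [hTCC0]
    obtain ⟨hs1, hk3⟩ := heqc hbase_le
    have hall3 : ∀ v ∈ C, d v = 3 := by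
      intro v hv
      have h := all_eq_one (C := C) (e := fun v => (d v : ℤ) - 2)
        (fun w hw => by have := hmemC w hw; show (1:ℤ) ≤ (d w : ℤ) - 2; omega)
        (by rw [← hEdef, hE, hs1, hk3]; norm_num) v hv
      have h' : (d v : ℤ) - 2 = 1 := h
      omega
    have hTCCz : TCC = 0 := by
      rw [hTCCdef]
      exact Finset.sum_eq_zero fun u hu => Finset.sum_eq_zero fun v hv => by
        rw [hall3 u hu, hall3 v hv]; simp
    have hB4 : (B.card : ℤ) = (n : ℤ) - 4 := by omega
    have hTeq : (∑ u, ∑ v, |(d u : ℤ) - d v|) = 8 * n - 20 := by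
      rw [hT, hTCCz, hE, hB4, hs1, hk3]
      push_cast
      ring
    refine ⟨hTeq, ?_⟩
    have hfil1 : (Finset.univ.filter (fun v => d v = 1)).card = 1 := by
      rw [← hAdef]; exact hs1
    have hBn4 : B.card = n - 4 := by omega
    have hfil2 : (Finset.univ.filter (fun v => d v = 2)).card = n - 4 := by
      rw [← hBdef]; exact hBn4
    have hfil3 : (Finset.univ.filter (fun v => d v = 3)).card = 3 := by
      have hCeq : Finset.univ.filter (fun v => d v = 3) = C := by
        apply Finset.ext; intro v
        rw [hmemC' v]
        simp only [Finset.mem_filter, Finset.mem_univ, true_and]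
        exact ⟨fun h => by omega, fun h => hall3 v ((hmemC' v).mpr h)⟩
      rw [hCeq, hk3]
    have hother : ∀ a : ℕ, a ≠ 1 → a ≠ 2 → a ≠ 3 →
        (Finset.univ.filter (fun v => d v = a)).card = 0 := by
      intro a ha1 ha2 ha3
      rw [Finset.card_eq_zero, Finset.filter_eq_empty_iff]
      intro v _ hva
      have h1v := hdeg v
      rcases le_or_gt 3 (d v) with h3 | h3
      · have := hall3 v ((hmemC' v).mpr h3); omega
      · omega
    rw [degseq_eq d (n - 4) 3 3 1 (by norm_num) hfil2 hfil3 hfil1 hother, add_assoc]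
    congr 1
  · intro hgood
    have hcnt : ∀ a : ℕ, (Finset.univ.filter (fun v => d v = a)).card
        = Multiset.count a (Multiset.replicate (n - 4) 2)
          + Multiset.count a ({3, 3, 3, 1} : Multiset ℕ) := by
      intro a
      rw [← count_map_univ, hgood, Multiset.count_add]
    have hs1 : A.card = 1 := by
      have h := hcnt 1
      rw [Multiset.count_replicate, if_neg (by norm_num),
        show Multiset.count 1 ({3, 3, 3, 1} : Multiset ℕ) = 1 from by decide] at h
      rw [hAdef]; omega
    have hBn4 : B.card = n - 4 := by
      have h := hcnt 2
      rw [Multiset.count_replicate, if_pos rfl,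
        show Multiset.count 2 ({3, 3, 3, 1} : Multiset ℕ) = 0 from by decide] at h
      rw [hBdef]; omega
    have hfil3card : (Finset.univ.filter (fun v => d v = 3)).card = 3 := by
      have h := hcnt 3
      rw [Multiset.count_replicate, if_neg (by norm_num),
        show Multiset.count 3 ({3, 3, 3, 1} : Multiset ℕ) = 3 from by decide] at h
      omega
    have hk3 : C.card = 3 := by omega
    have hsub : Finset.univ.filter (fun v => d v = 3) ⊆ C := by
      intro v hv
      rw [hmemC' v]
      have := (Finset.mem_filter.mp hv).2
      omega
    have hCeq : Finset.univ.filter (fun v => d v = 3) = C :=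
      Finset.eq_of_subset_of_card_le hsub (by rw [hfil3card, hk3])
    have hall3 : ∀ v ∈ C, d v = 3 := by
      intro v hv
      rw [← hCeq] at hv
      exact (Finset.mem_filter.mp hv).2
    have hTCCz : TCC = 0 := by
      rw [hTCCdef]
      exact Finset.sum_eq_zero fun u hu => Finset.sum_eq_zero fun v hv => by
        rw [hall3 u hu, hall3 v hv]; simp
    have hB4 : (B.card : ℤ) = (n : ℤ) - 4 := by omega
    rw [hT, hTCCz, hE, hB4, hs1, hk3]
    push_cast
    ring

theorem bicyclic_third_min_irrT {V : Type*} [Fintype V] (G : SimpleGraph V)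
    [DecidableRel G.Adj]
    (hconn : G.Connected) (n : ℕ) (hn : 7 ≤ n) (hcard : Fintype.card V = n)
    (hedges : G.edgeFinset.card = n + 1)
    (h1 : degSeq G ≠ Multiset.replicate (n - 2) 2 + {3, 3})
    (h2 : degSeq G ≠ Multiset.replicate (n - 1) 2 + {4}) :
    4 * n - 10 ≤ irrT G ∧
      (irrT G = 4 * n - 10 ↔
        degSeq G = Multiset.replicate (n - 4) 2 + {3, 3, 3, 1}) := by
  classical
  have hdeg : ∀ v, 1 ≤ G.degree v := by
    intro v
    have h2card : 1 < Fintype.card V := by omega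
    obtain ⟨u, hu⟩ := Fintype.exists_ne_of_one_lt_card h2card v
    obtain ⟨p⟩ := hconn.preconnected v u
    cases p with
    | nil => exact absurd rfl hu
    | cons h _ => exact (G.degree_pos_iff_exists_adj v).mpr ⟨_, h⟩
  have hsum : ∑ v, (G.degree v : ℤ) = 2 * n + 2 := by
    have h0 := G.sum_degrees_eq_twice_card_edges
    rw [hedges] at h0
    calc ∑ v, (G.degree v : ℤ) = ((∑ v, G.degree v : ℕ) : ℤ) := by push_cast; rfl
      _ = 2 * n + 2 := by rw [h0]; push_cast; ring
  have h1' : Multiset.map (fun v => G.degree v) Finset.univ.val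
      ≠ Multiset.replicate (n - 2) 2 + {3, 3} := h1
  have h2' : Multiset.map (fun v => G.degree v) Finset.univ.val
      ≠ Multiset.replicate (n - 1) 2 + {4} := h2
  obtain ⟨hge, heqd, hrev⟩ := core_s17 (fun v => G.degree v) n hn hcard hdeg hsum h1' h2'
  have hge' : (8 : ℤ) * n - 20 ≤ ∑ u, ∑ v, |(G.degree u : ℤ) - G.degree v| := hge
  have hirr : irrT G = (∑ u, ∑ v, |(G.degree u : ℤ) - G.degree v|) / 2 := rfl
  refine ⟨?_, ?_, ?_⟩
  · rw [hirr]; omega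
  · intro h
    rw [hirr] at h
    have hle : (∑ u, ∑ v, |(G.degree u : ℤ) - G.degree v|) ≤ 8 * n - 19 := by omega
    exact (heqd hle).2
  · intro h
    have hTeq : (∑ u, ∑ v, |(G.degree u : ℤ) - G.degree v|) = 8 * n - 20 := hrev h
    rw [hirr, hTeq]
    omega
end
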